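/- arXiv:math/0609475 — 6 statements merged into one kernel-verified Lean document; each statement's English description precedes it below -/
import Mathlib

section
/- Let n ≥ 1. Every tree with n vertices has at least binomial(n+1, 2) = n(n+1)/2 subtrees, and the path P_n is the unique minimizer: if T is a tree with n vertices that is not isomorphic to the path P_n, then χ(T) > n(n+1)/2. -/
open SimpleGraph

/-- `S` is the vertex set of a subtree of `G`: a nonempty set of vertices
whose induced subgraph is connected. -/
def SimpleGraph.IsSubtree {V : Type*} (G : SimpleGraph V) (S : Finset V) : Prop :=
  S.Nonempty ∧ (G.induce (S : Set V)).Connected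

/-- `χ(G)`: the number of subtrees of `G`. -/
noncomputable def SimpleGraph.subtreeCount {V : Type*} (G : SimpleGraph V) : ℕ :=
  Nat.card {S : Finset V // G.IsSubtree S}

namespace PathMinAux

open SimpleGraph Walk

set_option linter.unusedSectionVars false

variable {V : Type*} [DecidableEq V] {G : SimpleGraph V}

lemma getVert_eq_support_get {u v : V} (p : G.Walk u v) (i : ℕ) (hi : i ≤ p.length) :
    p.getVert i = p.support.get ⟨i, by rw [Walk.length_support]; omega⟩ := by
  induction p generalizing i with
  | nil =>
    have : i = 0 := by simpa using hi
    subst this; simp [Walk.getVert_zero]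
  | cons h q ih =>
    cases i with
    | zero => simp [Walk.getVert_zero]
    | succ i =>
      simp only [Walk.getVert_cons_succ, Walk.support_cons, List.get_cons_succ]
      exact ih i (by simpa [Walk.length_cons, Nat.succ_le_succ_iff] using hi)

lemma IsPath.getVert_inj {u v : V} {p : G.Walk u v} (hp : p.IsPath) {i j : ℕ}
    (hi : i ≤ p.length) (hj : j ≤ p.length) (h : p.getVert i = p.getVert j) : i = j := by
  rw [getVert_eq_support_get p i hi, getVert_eq_support_get p j hj] at h
  have := hp.support_nodup
  simpa using (List.Nodup.get_inj_iff this).mp h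

lemma getVert_mem_support {u v : V} (p : G.Walk u v) (i : ℕ) :
    p.getVert i ∈ p.support :=
  Walk.mem_support_iff_exists_getVert.2 ⟨min i p.length, by
    constructor
    · rcases le_total i p.length with h | h
      · simp [min_eq_left h]
      · simp [min_eq_right h, Walk.getVert_length, Walk.getVert_of_length_le _ h]
    · exact min_le_right _ _⟩

lemma eq_getVert_one_of_adj (hG : G.IsTree) {u v x : V} {p : G.Walk u v} (hp : p.IsPath)
    (hx : x ∈ p.support) (ha : G.Adj u x) : x = p.getVert 1 := by
  have hq : (p.takeUntil x hx).IsPath := hp.takeUntil hx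
  have hq' : (Walk.cons ha Walk.nil).IsPath := by
    simp [Walk.cons_isPath_iff, ha.ne]
  have he : p.takeUntil x hx = Walk.cons ha Walk.nil :=
    (hG.existsUnique_path u x).unique hq hq'
  have hlen : (p.takeUntil x hx).length = 1 := by rw [he]; simp
  calc x = (p.dropUntil x hx).getVert 0 := (Walk.getVert_zero _).symm
    _ = ((p.takeUntil x hx).append (p.dropUntil x hx)).getVert 1 := by
        rw [Walk.getVert_append, hlen]; simp
    _ = p.getVert 1 := by rw [Walk.take_spec p hx]

/-- In a tree, a vertex on a path has at most two prescribed possible neighbors on the path. -/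
lemma neighbors_in_support (hG : G.IsTree) {u v x : V} {p : G.Walk u v} (hp : p.IsPath)
    (hx : x ∈ p.support) :
    ∃ a b, ∀ z ∈ p.support, G.Adj x z → z = a ∨ z = b := by
  refine ⟨(p.takeUntil x hx).reverse.getVert 1, (p.dropUntil x hx).getVert 1, ?_⟩
  intro z hz hadj
  rw [← Walk.take_spec p hx, Walk.mem_support_append_iff] at hz
  rcases hz with hz | hz
  · left
    have hz' : z ∈ (p.takeUntil x hx).reverse.support := by
      rwa [Walk.support_reverse, List.mem_reverse]
    exact eq_getVert_one_of_adj hG (hp.takeUntil hx).reverse hz' hadj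
  · right
    exact eq_getVert_one_of_adj hG (hp.dropUntil hx) hz hadj

/-- An interior point of a path has two distinct neighbors on the path. -/
lemma interior_two_neighbors (hG : G.IsTree) {u v x : V} {p : G.Walk u v} (hp : p.IsPath)
    (hx : x ∈ p.support) (hxu : x ≠ u) (hxv : x ≠ v) :
    ∃ a ∈ p.support, ∃ b ∈ p.support, a ≠ b ∧ G.Adj x a ∧ G.Adj x b := by
  set q : G.Walk x u := (p.takeUntil x hx).reverse with hqdef
  set r : G.Walk x v := p.dropUntil x hx with hrdef
  have hqlen : q.length ≠ 0 := by
    intro h0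
    exact hxu (Walk.eq_of_length_eq_zero h0)
  have hrlen : r.length ≠ 0 := by
    intro h0
    exact hxv (Walk.eq_of_length_eq_zero h0)
  have hqadj : G.Adj x (q.getVert 1) :=
    Walk.adj_snd (by rw [Walk.nil_iff_length_eq]; exact hqlen)
  have hradj : G.Adj x (r.getVert 1) :=
    Walk.adj_snd (by rw [Walk.nil_iff_length_eq]; exact hrlen)
  refine ⟨q.getVert 1, ?_, r.getVert 1, ?_, ?_, hqadj, hradj⟩
  · have : q.getVert 1 ∈ (p.takeUntil x hx).support := by
      have := getVert_mem_support q 1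
      rwa [hqdef, Walk.support_reverse, List.mem_reverse] at this
    exact Walk.support_takeUntil_subset p hx this
  · exact Walk.support_dropUntil_subset p hx (getVert_mem_support r 1)
  · intro heq
    have hbx : r.getVert 1 ≠ x := fun h => G.irrefl (h ▸ hradj)
    have hbtail : r.getVert 1 ∈ r.support.tail := by
      have hmem := getVert_mem_support r 1
      rw [Walk.support_eq_cons r] at hmem
      rcases List.mem_cons.mp hmem with h | h
      · exact absurd h hbx
      · exact h
    have hamem : q.getVert 1 ∈ (p.takeUntil x hx).support := by
      have := getVert_mem_support q 1
      rwa [hqdef, Walk.support_reverse, List.mem_reverse] at this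
    have hnd : ((p.takeUntil x hx).support ++ r.support.tail).Nodup := by
      have := hp.support_nodup
      rwa [← Walk.take_spec p hx, Walk.support_append] at this
    have hdisj := (List.nodup_append'.mp hnd).2.2
    exact hdisj hamem (heq ▸ hbtail)

lemma dist_getVert_le (hconn : G.Connected) {u w : V} (p : G.Walk u w) (i : ℕ) :
    G.dist u (p.getVert i) ≤ i := by
  induction p generalizing i with
  | nil => simp [Walk.getVert_of_length_le, SimpleGraph.dist_self]
  | @cons u x w h q ih =>
    cases i with
    | zero => simp
    | succ i =>
      rw [Walk.getVert_cons_succ]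
      calc G.dist u (q.getVert i) ≤ G.dist u x + G.dist x (q.getVert i) :=
            hconn.dist_triangle
        _ ≤ 1 + i := by
            have h1 : G.dist u x ≤ (Walk.cons h Walk.nil).length := dist_le _
            simp at h1
            exact Nat.add_le_add h1 (ih i)
        _ = i + 1 := by omega

lemma dist_injective [Fintype V] (hG : G.IsTree) [DecidableRel G.Adj]
    (hdeg : ∀ x, G.degree x ≤ 2) {u : V} (hu : G.degree u = 1) :
    Function.Injective (G.dist u) := by
  have hconn := hG.isConnected
  intro v w hvw
  by_contra hne
  obtain ⟨p, hp⟩ := hconn.exists_walk_length_eq_dist u v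
  obtain ⟨q, hq⟩ := hconn.exists_walk_length_eq_dist u w
  have hppath : p.IsPath := p.isPath_of_length_eq_dist hp
  have hqpath : q.IsPath := q.isPath_of_length_eq_dist hq
  set d := G.dist u v with hd
  have hqlen : q.length = d := by rw [hq, ← hvw]
  have hplen : p.length = d := hp
  have h1 : p.getVert d = v := by rw [← hplen, Walk.getVert_length]
  have h2 : q.getVert d = w := by rw [← hqlen, Walk.getVert_length]
  have hPex : ∃ k, p.getVert k ≠ q.getVert k := by
    refine ⟨d, ?_⟩
    rw [h1, h2]; exact hne
  classical
  set k := Nat.find hPex with hkdef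
  have hk : p.getVert k ≠ q.getVert k := Nat.find_spec hPex
  have hmin : ∀ j < k, p.getVert j = q.getVert j := fun j hj => by
    have := Nat.find_min hPex hj
    simpa using this
  have hk0 : k ≠ 0 := by
    intro h0
    apply hk
    rw [h0, Walk.getVert_zero, Walk.getVert_zero]
  have hkd : k ≤ d := by
    apply Nat.find_min' hPex
    rw [h1, h2]; exact hne
  set x := p.getVert (k-1) with hxdef
  set a := p.getVert k with hadef
  set b := q.getVert k with hbdef
  have hxq : q.getVert (k-1) = x := (hmin (k-1) (by omega)).symm
  have hxa : G.Adj x a := by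
    have := p.adj_getVert_succ (i := k-1) (by omega)
    rwa [show k - 1 + 1 = k from by omega] at this
  have hxb : G.Adj x b := by
    have := q.adj_getVert_succ (i := k-1) (by omega)
    rwa [show k - 1 + 1 = k from by omega, hxq] at this
  rcases Nat.lt_or_ge k 2 with hk1 | hk2
  · have hk1' : k = 1 := by omega
    have hxu : x = u := by rw [hxdef, hk1']; simp [Walk.getVert_zero]
    have : 1 < G.degree u := by
      rw [← card_neighborFinset_eq_degree]
      refine Finset.one_lt_card.mpr ⟨a, ?_, b, ?_, hk⟩ <;>
        rw [mem_neighborFinset] <;> [exact hxu ▸ hxa; exact hxu ▸ hxb]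
    omega
  · set c := p.getVert (k-2) with hcdef
    have hxc : G.Adj x c := by
      have := p.adj_getVert_succ (i := k-2) (by omega)
      rw [show k - 2 + 1 = k - 1 from by omega] at this
      exact this.symm
    have hca : c ≠ a := fun h => by
      have := IsPath.getVert_inj hppath (by omega : k - 2 ≤ p.length)
        (by omega : k ≤ p.length) h
      omega
    have hcb : c ≠ b := fun h => by
      have hcq : q.getVert (k-2) = c := (hmin (k-2) (by omega)).symm
      have := IsPath.getVert_inj hqpath (by omega : k - 2 ≤ q.length)
        (by omega : k ≤ q.length) (hcq.trans h)
      omega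
    have h3 : 3 ≤ G.degree x := by
      rw [← card_neighborFinset_eq_degree]
      have hsub : {a, b, c} ⊆ G.neighborFinset x := by
        intro z hz
        simp only [Finset.mem_insert, Finset.mem_singleton] at hz
        rcases hz with rfl | rfl | rfl <;> rw [mem_neighborFinset] <;>
          [exact hxa; exact hxb; exact hxc]
      have hcard : ({a, b, c} : Finset V).card = 3 :=
        Finset.card_eq_three.mpr ⟨a, b, c, hk, Ne.symm hca, Ne.symm hcb, rfl⟩
      calc 3 = ({a, b, c} : Finset V).card := hcard.symm
        _ ≤ (G.neighborFinset x).card := Finset.card_le_card hsub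
    have := hdeg x
    omega

lemma exists_leaf [Fintype V] (hG : G.IsTree) [DecidableRel G.Adj]
    (h2 : 2 ≤ Fintype.card V) : ∃ u, G.degree u = 1 := by
  have hconn := hG.isConnected
  have he := hG.card_edgeFinset
  have hsum : ∑ v, G.degree v = 2 * G.edgeFinset.card :=
    sum_degrees_eq_twice_card_edges G
  obtain ⟨u, hu⟩ : ∃ u, G.degree u ≤ 1 := by
    by_contra h
    push_neg at h
    have hge : 2 * Fintype.card V ≤ ∑ v, G.degree v := by
      calc 2 * Fintype.card V = ∑ _v : V, 2 := by
            simp [Finset.sum_const, Finset.card_univ, mul_comm]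
        _ ≤ _ := Finset.sum_le_sum fun i _ => h i
    omega
  refine ⟨u, ?_⟩
  have hpos : 0 < G.degree u := by
    rw [degree_pos_iff_exists_adj]
    obtain ⟨w, hw⟩ := Fintype.exists_ne_of_one_lt_card (by omega) u
    obtain ⟨p⟩ := hconn.preconnected u w
    refine ⟨p.getVert 1, Walk.adj_snd ?_⟩
    rw [Walk.nil_iff_length_eq]
    intro h0
    exact hw (Walk.eq_of_length_eq_zero h0).symm
  omega

lemma iso_path_of_degree_le_two [Fintype V] (hG : G.IsTree) [DecidableRel G.Adj]
    (hdeg : ∀ x, G.degree x ≤ 2) : Nonempty (G ≃g pathGraph (Fintype.card V)) := by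
  have hconn := hG.isConnected
  set n := Fintype.card V with hn
  rcases Nat.lt_or_ge n 2 with hn1 | hn2
  · have hpos : 0 < n := Fintype.card_pos_iff.mpr hconn.nonempty
    have hsub : Subsingleton V := Fintype.card_le_one_iff_subsingleton.mp (by omega)
    let e : V ≃ Fin n := Fintype.equivFinOfCardEq hn.symm
    refine ⟨⟨e, ?_⟩⟩
    intro a b
    have hab : a = b := Subsingleton.elim a b
    subst hab
    constructor
    · intro h; exact absurd h (pathGraph n).irrefl
    · intro h; exact absurd h G.irrefl
  · obtain ⟨u, hu⟩ := exists_leaf hG (by omega)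
    have hinj := dist_injective hG hdeg hu
    have hlt : ∀ v, G.dist u v < n := fun v => by
      obtain ⟨p, hp, -⟩ := hG.existsUnique_path u v
      exact lt_of_le_of_lt (dist_le p) hp.length_lt
    let f : V → Fin n := fun v => ⟨G.dist u v, hlt v⟩
    have hfinj : Function.Injective f := fun a b h =>
      hinj (by simpa [f, Fin.ext_iff] using h)
    have hbij : Function.Bijective f :=
      (Fintype.bijective_iff_injective_and_card f).mpr ⟨hfinj, by simp [hn]⟩
    have hfwd : ∀ {a b : V}, G.Adj a b → (pathGraph n).Adj (f a) (f b) := by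
      intro a b hab
      rw [pathGraph_adj]
      have h1 : G.dist u b ≤ G.dist u a + 1 := by
        have := hconn.dist_triangle (u := u) (v := a) (w := b)
        rwa [dist_eq_one_iff_adj.mpr hab] at this
      have h2 : G.dist u a ≤ G.dist u b + 1 := by
        have := hconn.dist_triangle (u := u) (v := b) (w := a)
        rwa [dist_eq_one_iff_adj.mpr hab.symm] at this
      have h3 : G.dist u a ≠ G.dist u b := fun h => hab.ne (hinj h)
      simp only [f]
      omega
    have hbwd : ∀ {a b : V}, G.dist u b = G.dist u a + 1 → G.Adj a b := by
      intro a b hab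
      obtain ⟨p, hp⟩ := hconn.exists_walk_length_eq_dist u b
      set dv := G.dist u a with hdv
      have hplen : p.length = dv + 1 := by rw [hp, hab]
      have hadj : G.Adj (p.getVert dv) b := by
        have := p.adj_getVert_succ (i := dv) (by omega)
        rwa [show dv + 1 = p.length from hplen.symm, Walk.getVert_length] at this
      have hle : G.dist u (p.getVert dv) ≤ dv := dist_getVert_le hconn p dv
      have hge : dv ≤ G.dist u (p.getVert dv) := by
        have htr := hconn.dist_triangle (u := u) (v := p.getVert dv) (w := b)
        have hone : G.dist (p.getVert dv) b = 1 := dist_eq_one_iff_adj.mpr hadj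
        omega
      have heq : p.getVert dv = a := hinj ((le_antisymm hle hge).trans hdv)
      exact heq ▸ hadj
    refine ⟨⟨Equiv.ofBijective f hbij, ?_⟩⟩
    intro a b
    constructor
    · intro h
      rw [pathGraph_adj] at h
      rcases h with h | h
      · exact (hbwd (show G.dist u b = G.dist u a + 1 by
          simpa [f, Equiv.ofBijective] using h.symm))
      · exact (hbwd (show G.dist u a = G.dist u b + 1 by
          simpa [f, Equiv.ofBijective] using h.symm)).symm
    · intro h; exact hfwd h

noncomputable def tp (hG : G.IsTree) (u v : V) : G.Walk u v :=
  (hG.existsUnique_path u v).choose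

lemma tp_isPath (hG : G.IsTree) (u v : V) : (tp hG u v).IsPath :=
  (hG.existsUnique_path u v).choose_spec.1

lemma tp_unique (hG : G.IsTree) {u v : V} {q : G.Walk u v} (hq : q.IsPath) :
    q = tp hG u v :=
  (hG.existsUnique_path u v).choose_spec.2 q hq

lemma tp_symm (hG : G.IsTree) (u v : V) : tp hG v u = (tp hG u v).reverse :=
  (tp_unique hG ((tp_isPath hG u v).reverse)).symm

/-- The subtree associated to an unordered pair of vertices. -/
noncomputable def F (hG : G.IsTree) : Sym2 V → Finset V :=
  Sym2.lift ⟨fun u v => (tp hG u v).support.toFinset, by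
    intro u v
    dsimp only
    rw [tp_symm hG u v, Walk.support_reverse, List.toFinset_reverse]⟩

variable (hG : G.IsTree)

lemma F_mk (u v : V) : F hG s(u, v) = (tp hG u v).support.toFinset := rfl

lemma isSubtree_F (s : Sym2 V) : G.IsSubtree (F hG s) := by
  induction s with
  | _ u v =>
    rw [F_mk]
    constructor
    · exact ⟨u, by simp [List.mem_toFinset]⟩
    · have hc := (tp hG u v).connected_induce_support
      have hset : ((((tp hG u v).support.toFinset : Finset V)) : Set V)
          = {x | x ∈ (tp hG u v).support} := by
        ext z; simp [List.mem_toFinset]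
      rw [hset]
      exact hc

lemma pair_eq_sym2 {u v u' v' : V} (h : ({u, v} : Finset V) = {u', v'}) :
    s(u, v) = s(u', v') := by
  have h1 : u' = u ∨ u' = v := by
    have : u' ∈ ({u, v} : Finset V) := by rw [h]; simp
    simpa using this
  have h2 : v' = u ∨ v' = v := by
    have : v' ∈ ({u, v} : Finset V) := by rw [h]; simp
    simpa using this
  have h3 : u = u' ∨ u = v' := by
    have : u ∈ ({u', v'} : Finset V) := by rw [← h]; simp
    simpa using this
  have h4 : v = u' ∨ v = v' := by
    have : v ∈ ({u', v'} : Finset V) := by rw [← h]; simp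
    simpa using this
  rw [Sym2.eq_iff]
  rcases h1 with rfl | rfl <;> rcases h2 with rfl | rfl <;> tauto

variable [DecidableRel G.Adj]

/-- The endpoint-extraction function. -/
def gg (G : SimpleGraph V) [DecidableRel G.Adj] (S : Finset V) : Finset V :=
  S.filter (fun x => ((S.filter (fun y => G.Adj x y)).card ≤ 1))

/-- Endpoint extraction recovers the endpoints of a tree path. -/
lemma gg_F (u v : V) : gg G (F hG s(u, v)) = {u, v} := by
  rw [F_mk]
  set p := tp hG u v with hp
  have hpath := tp_isPath hG u v
  ext x
  simp only [gg, Finset.mem_filter, List.mem_toFinset, Finset.mem_insert, Finset.mem_singleton]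
  constructor
  · rintro ⟨hx, hcard⟩
    by_contra hne
    push_neg at hne
    obtain ⟨a, ha, b, hb, hab, hxa, hxb⟩ :=
      interior_two_neighbors hG hpath hx hne.1 hne.2
    have hsub : ({a, b} : Finset V) ⊆ p.support.toFinset.filter (fun y => G.Adj x y) := by
      intro z hz
      simp only [Finset.mem_insert, Finset.mem_singleton] at hz
      rcases hz with rfl | rfl <;> simp [Finset.mem_filter, List.mem_toFinset, hp, ha, hb, hxa, hxb]
    have h2 : 2 ≤ (p.support.toFinset.filter (fun y => G.Adj x y)).card := by
      calc 2 = ({a, b} : Finset V).card := by rw [Finset.card_pair hab]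
        _ ≤ _ := Finset.card_le_card hsub
    omega
  · intro hx
    have key : ∀ w y : V, ∀ q : G.Walk w y, q.IsPath →
        (q.support.toFinset.filter (fun z => G.Adj w z)).card ≤ 1 := by
      intro w y q hq
      apply Finset.card_le_one.mpr
      intro a ha b hb
      simp only [Finset.mem_filter, List.mem_toFinset] at ha hb
      rw [eq_getVert_one_of_adj hG hq ha.1 ha.2, eq_getVert_one_of_adj hG hq hb.1 hb.2]
    rcases hx with rfl | rfl
    · exact ⟨p.start_mem_support, key x v p hpath⟩
    · refine ⟨p.end_mem_support, ?_⟩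
      have hrev := key x u p.reverse hpath.reverse
      have hseq : p.reverse.support.toFinset = p.support.toFinset := by
        rw [Walk.support_reverse, List.toFinset_reverse]
      rwa [hseq] at hrev

lemma F_injective : Function.Injective (F hG) := by
  intro s t h
  induction s with
  | _ u v =>
    induction t with
    | _ u' v' =>
      apply pair_eq_sym2
      rw [← gg_F hG u v, ← gg_F hG u' v', h]

end PathMinAux

open PathMinAux in
/-- The path `P_n` has `binomial (n+1) 2 = n(n+1)/2` subtrees, fewer than any other
tree on `n` vertices: every tree with `n ≥ 1` vertices has at least `n(n+1)/2`
subtrees, and any such tree not isomorphic to `P_n` has strictly more. -/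
theorem path_minimizes_subtree_count {n : ℕ} (hn : 1 ≤ n) {V : Type*} [Fintype V]
    (G : SimpleGraph V) (hG : G.IsTree) (hcard : Fintype.card V = n) :
    (n + 1).choose 2 ≤ G.subtreeCount ∧
      (¬ Nonempty (G ≃g pathGraph n) → (n + 1).choose 2 < G.subtreeCount) := by
  classical
  letI : Fintype {S : Finset V // G.IsSubtree S} := Fintype.ofFinite _
  have hcount : G.subtreeCount = Fintype.card {S : Finset V // G.IsSubtree S} :=
    Nat.card_eq_fintype_card
  let Φ : Sym2 V → {S : Finset V // G.IsSubtree S} := fun s => ⟨F hG s, isSubtree_F hG s⟩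
  have hΦ : Function.Injective Φ := fun s t h =>
    F_injective hG (congrArg Subtype.val h)
  have hsym : Fintype.card (Sym2 V) = (n + 1).choose 2 := by
    rw [Sym2.card, hcard]
  constructor
  · rw [hcount, ← hsym]
    exact Fintype.card_le_of_injective Φ hΦ
  · intro hniso
    obtain ⟨x, hx3⟩ : ∃ x, 3 ≤ G.degree x := by
      by_contra h
      push_neg at h
      exact hniso (hcard ▸ iso_path_of_degree_le_two hG (fun x => by have := h x; omega))
    have h1 : 1 < (G.neighborFinset x).card := by
      rw [card_neighborFinset_eq_degree]; omega
    obtain ⟨a, ha, b, hb, hab⟩ := Finset.one_lt_card.mp h1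
    have h2 : 0 < (((G.neighborFinset x).erase a).erase b).card := by
      rw [Finset.card_erase_of_mem (Finset.mem_erase.mpr ⟨hab.symm, hb⟩),
        Finset.card_erase_of_mem ha, card_neighborFinset_eq_degree]
      omega
    obtain ⟨c, hc⟩ := Finset.card_pos.mp h2
    rw [Finset.mem_erase, Finset.mem_erase] at hc
    obtain ⟨hcb, hca, hcN⟩ := hc
    have hxa : G.Adj x a := (mem_neighborFinset G x a).mp ha
    have hxb : G.Adj x b := (mem_neighborFinset G x b).mp hb
    have hxc : G.Adj x c := (mem_neighborFinset G x c).mp hcN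
    set S₀ : Finset V := insert x {a, b, c} with hS₀
    have hS₀sub : G.IsSubtree S₀ := by
      refine ⟨⟨x, by simp [hS₀]⟩, ?_⟩
      have hseteq : ((S₀ : Finset V) : Set V)
          = ({x, a} : Set V) ∪ (({x, b} : Set V) ∪ ({x, c} : Set V)) := by
        ext z
        simp only [hS₀, Finset.coe_insert, Finset.coe_singleton, Set.mem_insert_iff,
          Set.mem_union, Set.mem_singleton_iff, Finset.mem_insert, Finset.mem_singleton]
        tauto
      rw [hseteq]
      exact induce_union_connected (induce_pair_connected_of_adj hxa).preconnected
        (induce_union_connected (induce_pair_connected_of_adj hxb).preconnected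
          (induce_pair_connected_of_adj hxc).preconnected ⟨x, by simp⟩).preconnected ⟨x, by simp⟩
    have hnotmem : (⟨S₀, hS₀sub⟩ : {S : Finset V // G.IsSubtree S}) ∉ Set.range Φ := by
      rintro ⟨s, hs⟩
      have hval : F hG s = S₀ := congrArg Subtype.val hs
      induction s with
      | _ u v =>
        rw [F_mk] at hval
        have hmem : ∀ z ∈ S₀, z ∈ (tp hG u v).support := by
          intro z hz
          rw [← hval] at hz
          exact List.mem_toFinset.mp hz
        have hxs : x ∈ (tp hG u v).support := hmem x (by simp [hS₀])
        have has : a ∈ (tp hG u v).support := hmem a (by simp [hS₀])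
        have hbs : b ∈ (tp hG u v).support := hmem b (by simp [hS₀])
        have hcs : c ∈ (tp hG u v).support := hmem c (by simp [hS₀])
        obtain ⟨A, B, hAB⟩ := neighbors_in_support hG (tp_isPath hG u v) hxs
        have ha' := hAB a has hxa
        have hb' := hAB b hbs hxb
        have hc' := hAB c hcs hxc
        rcases ha' with rfl | rfl <;> rcases hb' with rfl | rfl <;>
          rcases hc' with h | h <;> simp_all
    have hlt : Fintype.card (Sym2 V) < Fintype.card {S : Finset V // G.IsSubtree S} :=
      Fintype.card_lt_of_injective_of_notMem Φ hΦ hnotmem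
    rw [hcount, ← hsym]
    exact hlt
end

section
/- Let n ≥ 1. Every tree with n vertices has at most 2^{n-1} + n - 1 subtrees, and the star K_{1,n-1} is the unique maximizer: if T is a tree with n vertices that is not isomorphic to the star K_{1,n-1}, then χ(T) < 2^{n-1} + n - 1. -/
set_option linter.unusedVariables false
set_option linter.unusedSectionVars false
set_option maxHeartbeats 1000000


open SimpleGraph
open Finset

/-- The star with center `c`: `c` is adjacent to every other vertex, and there are
no other edges. -/
def starGraph {V : Type*} (c : V) : SimpleGraph V :=
  SimpleGraph.fromRel (fun a _ => a = c)

section Helpers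

variable {V : Type*} [Fintype V] [DecidableEq V] {G : SimpleGraph V} [DecidableRel G.Adj]

/-- Edges of `G` lying entirely inside `S`. -/
def treeEdges (G : SimpleGraph V) [DecidableRel G.Adj] (S : Finset V) : Finset (Sym2 V) :=
  G.edgeFinset.filter (fun e => ∀ v ∈ e, v ∈ S)

lemma mem_treeEdges {S : Finset V} {e : Sym2 V} :
    e ∈ treeEdges G S ↔ e ∈ G.edgeSet ∧ ∀ v ∈ e, v ∈ S := by
  simp [treeEdges, mem_filter, mem_edgeFinset]

lemma exists_adj_mem {S : Finset V} (hconn : (G.induce (S : Set V)).Connected)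
    {v u : V} (hv : v ∈ S) (hu : u ∈ S) (hne : v ≠ u) : ∃ w ∈ S, G.Adj v w := by
  obtain ⟨p⟩ := hconn ⟨v, hv⟩ ⟨u, hu⟩
  have hp : ¬ p.Nil := SimpleGraph.Walk.not_nil_of_ne (by simp [Subtype.ext_iff, hne])
  have hadj := p.adj_snd hp
  exact ⟨(p.getVert 1 : (S : Set V)), (p.getVert 1).2, hadj⟩

lemma mem_iff_treeEdges {S : Finset V} (hs : G.IsSubtree S) (h2 : 2 ≤ S.card) {v : V} :
    v ∈ S ↔ ∃ e ∈ treeEdges G S, v ∈ e := by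
  constructor
  · intro hv
    obtain ⟨u, hu, hune⟩ := Finset.exists_mem_ne (s := S) (by omega) v
    obtain ⟨w, hw, hadj⟩ := exists_adj_mem hs.2 hv hu (fun h => hune h.symm)
    refine ⟨s(v, w), mem_treeEdges.2 ⟨hadj, ?_⟩, Sym2.mem_mk_left _ _⟩
    intro x hx
    rcases Sym2.mem_iff.1 hx with rfl | rfl
    · exact hv
    · exact hw
  · rintro ⟨e, he, hve⟩
    exact (mem_treeEdges.1 he).2 v hve

lemma treeEdges_injOn {S S' : Finset V} (hs : G.IsSubtree S) (h2 : 2 ≤ S.card)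
    (hs' : G.IsSubtree S') (h2' : 2 ≤ S'.card) (h : treeEdges G S = treeEdges G S') :
    S = S' := by
  ext v
  rw [mem_iff_treeEdges hs h2, mem_iff_treeEdges hs' h2', h]

lemma treeEdges_nonempty {S : Finset V} (hs : G.IsSubtree S) (h2 : 2 ≤ S.card) :
    (treeEdges G S).Nonempty := by
  obtain ⟨v, hv⟩ := hs.1
  obtain ⟨e, he, _⟩ := (mem_iff_treeEdges hs h2).1 hv
  exact ⟨e, he⟩

lemma not_treeEdges_pair {S : Finset V} (hs : G.IsSubtree S) (h2 : 2 ≤ S.card)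
    {e₁ e₂ : Sym2 V} (hd : ∀ v ∈ e₁, v ∉ e₂)
    (h : treeEdges G S = {e₁, e₂}) : False := by
  have he₁ : e₁ ∈ treeEdges G S := by rw [h]; simp
  have he₂ : e₂ ∈ treeEdges G S := by rw [h]; simp
  induction e₁ using Sym2.ind with | _ a b => ?_
  induction e₂ using Sym2.ind with | _ c d => ?_
  have ha : a ∈ S := (mem_treeEdges.1 he₁).2 a (Sym2.mem_mk_left _ _)
  have hc : c ∈ S := (mem_treeEdges.1 he₂).2 c (Sym2.mem_mk_left _ _)
  have key : ∀ (x y : (S : Set V)) (p : (G.induce (S : Set V)).Walk x y),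
      (x : V) ∈ s(a, b) → (y : V) ∈ s(a, b) := by
    intro x y p
    induction p with
    | nil => exact id
    | cons hadj p ih =>
      rename_i u w _
      intro hx
      have hmem : s((u : V), (w : V)) ∈ treeEdges G S :=
        mem_treeEdges.2 ⟨hadj, by
          intro z hz
          rcases Sym2.mem_iff.1 hz with rfl | rfl
          · exact u.2
          · exact w.2⟩
      rw [h] at hmem
      rcases Finset.mem_insert.1 hmem with heq | heq
      · apply ih
        have : (w : V) ∈ s((u : V), (w : V)) := Sym2.mem_mk_right _ _
        rwa [heq] at this
      · exfalso
        apply hd _ hx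
        have : (u : V) ∈ s((u : V), (w : V)) := Sym2.mem_mk_left _ _
        rw [Finset.mem_singleton.1 heq] at this
        exact this
  obtain ⟨p⟩ := hs.2 ⟨a, ha⟩ ⟨c, hc⟩
  exact hd c (key _ _ p (Sym2.mem_mk_left _ _)) (Sym2.mem_mk_left _ _)

end Helpers
section Star

variable {V : Type*} {G : SimpleGraph V}

lemma no_triangle (hG : G.IsAcyclic) {a b c : V} (hab : G.Adj a b) (hbc : G.Adj b c)
    (hac : G.Adj a c) : False := by
  have hpu := SimpleGraph.isAcyclic_iff_path_unique.mp hG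
  have hp2 : (Walk.cons hab (Walk.cons hbc Walk.nil)).IsPath := by
    simp [Walk.isPath_def, hab.ne, hac.ne, hbc.ne]
  have := hpu (Path.singleton hac) ⟨Walk.cons hab (Walk.cons hbc Walk.nil), hp2⟩
  have hlen : (Path.singleton hac : G.Walk a c).length
      = (Walk.cons hab (Walk.cons hbc Walk.nil)).length := by rw [this]
  simp [Path.singleton] at hlen

lemma exists_adj_of_connected (hconn : G.Connected) {v u : V} (hne : v ≠ u) :
    ∃ w, G.Adj v w := by
  obtain ⟨p⟩ := hconn v u
  have hp : ¬ p.Nil := SimpleGraph.Walk.not_nil_of_ne hne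
  exact ⟨p.getVert 1, p.adj_snd hp⟩

/-- If a tree has an edge and every two edges meet, it is a star. -/
lemma star_structure (hG : G.IsTree) {a b : V} (hab : G.Adj a b)
    (hmeet : ∀ e ∈ G.edgeSet, ∀ f ∈ G.edgeSet, ∃ v, v ∈ e ∧ v ∈ f) :
    ∃ c, ∀ x y, G.Adj x y ↔ x ≠ y ∧ (x = c ∨ y = c) := by
  have hacyc := hG.IsAcyclic
  have hconn := hG.isConnected
  -- find a center c contained in every edge
  have hcenter : ∃ c, ∀ e ∈ G.edgeSet, c ∈ e := by
    by_cases hA : ∀ e ∈ G.edgeSet, a ∈ e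
    · exact ⟨a, hA⟩
    · push_neg at hA
      obtain ⟨f, hf, haf⟩ := hA
      obtain ⟨v, hvf, hvab⟩ := hmeet f hf s(a, b) hab
      rcases Sym2.mem_iff.1 hvab with rfl | rfl
      · exact absurd hvf haf
      · -- v = b ∈ f; write f = s(b, x)
        obtain ⟨x, rfl⟩ := Sym2.mem_iff_exists.1 hvf
        have hbx : G.Adj v x := hf
        have hxa : x ≠ a := fun h => haf (by rw [h]; simp)
        refine ⟨v, fun e he => ?_⟩
        by_contra hbe
        obtain ⟨w, hwe, hwab⟩ := hmeet e he s(a, v) hab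
        have hwa : w = a := by
          rcases Sym2.mem_iff.1 hwab with rfl | rfl
          · rfl
          · exact absurd hwe hbe
        subst hwa
        obtain ⟨z, hze, hzbx⟩ := hmeet e he s(v, x) hbx
        have hzx : z = x := by
          rcases Sym2.mem_iff.1 hzbx with rfl | rfl
          · exact absurd hze hbe
          · rfl
        subst hzx
        -- e contains both a and z=x, so e = s(a, x), giving a triangle a-v-x
        obtain ⟨y, rfl⟩ := Sym2.mem_iff_exists.1 hwe
        have : z = y := by
          rcases Sym2.mem_iff.1 hze with rfl | rfl
          · exact absurd hwe (fun _ => hxa rfl)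
          · rfl
        subst this
        exact no_triangle hacyc hab hbx (G.mem_edgeSet.1 he)
  obtain ⟨c, hc⟩ := hcenter
  refine ⟨c, fun x y => ?_⟩
  constructor
  · intro hxy
    refine ⟨hxy.ne, ?_⟩
    have := hc s(x, y) hxy
    rcases Sym2.mem_iff.1 this with rfl | rfl
    · exact Or.inl rfl
    · exact Or.inr rfl
  · rintro ⟨hne, rfl | rfl⟩
    · -- x = c : show c adjacent to y
      obtain ⟨w, hw⟩ := exists_adj_of_connected hconn (Ne.symm hne)
      have := hc s(y, w) hw
      rcases Sym2.mem_iff.1 this with rfl | rfl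
      · exact absurd rfl hne
      · exact hw.symm
    · obtain ⟨w, hw⟩ := exists_adj_of_connected hconn hne
      have := hc s(x, w) hw
      rcases Sym2.mem_iff.1 this with rfl | rfl
      · exact absurd rfl hne
      · exact hw

end Star

section Count

variable {V : Type*} [Fintype V] [DecidableEq V] {G : SimpleGraph V} [DecidableRel G.Adj]

lemma subtreeCount_eq [DecidablePred fun S : Finset V => G.IsSubtree S] :
    G.subtreeCount = (univ.filter (fun S => G.IsSubtree S)).card := by
  rw [SimpleGraph.subtreeCount, Nat.card_eq_fintype_card, Fintype.card_subtype]

lemma count_le_aux {T : Finset (Finset (Sym2 V))}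
    (hmaps : ∀ S : Finset V, G.IsSubtree S → 2 ≤ S.card → treeEdges G S ∈ T) :
    G.subtreeCount ≤ Fintype.card V + T.card := by
  classical
  rw [subtreeCount_eq]
  set A : Finset (Finset V) := univ.filter (fun S => G.IsSubtree S ∧ S.card = 1) with hA
  set B : Finset (Finset V) := univ.filter (fun S => G.IsSubtree S ∧ 2 ≤ S.card) with hB
  have hsub : univ.filter (fun S => G.IsSubtree S) ⊆ A ∪ B := by
    intro S hS
    rw [mem_filter] at hS
    have h1 : 1 ≤ S.card := Finset.card_pos.2 hS.2.1
    rcases Nat.lt_or_ge S.card 2 with h | h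
    · exact Finset.mem_union_left _ (by simp [hA, hS.2]; omega)
    · exact Finset.mem_union_right _ (by simp [hB, hS.2, h])
  have hAcard : A.card ≤ Fintype.card V := by
    have : A ⊆ univ.image (fun v => ({v} : Finset V)) := by
      intro S hS
      rw [hA, mem_filter] at hS
      obtain ⟨v, rfl⟩ := Finset.card_eq_one.1 hS.2.2
      exact Finset.mem_image_of_mem _ (mem_univ v)
    calc A.card ≤ _ := Finset.card_le_card this
      _ ≤ univ.card := Finset.card_image_le
      _ = Fintype.card V := Finset.card_univ
  have hBcard : B.card ≤ T.card := by
    apply Finset.card_le_card_of_injOn (treeEdges G)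
    · intro S hS
      rw [Finset.mem_coe, hB, mem_filter] at hS
      exact hmaps S hS.2.1 hS.2.2
    · intro S hS S' hS' h
      simp only [hB, coe_filter, Set.mem_setOf_eq] at hS hS'
      exact treeEdges_injOn hS.2.1 hS.2.2 hS'.2.1 hS'.2.2 h
  calc (univ.filter (fun S => G.IsSubtree S)).card ≤ (A ∪ B).card := Finset.card_le_card hsub
    _ ≤ A.card + B.card := Finset.card_union_le _ _
    _ ≤ Fintype.card V + T.card := Nat.add_le_add hAcard hBcard

end Count

/-- The star `K_{1,n-1}` has `2^(n-1) + n - 1` subtrees, more than any other tree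
on `n` vertices: every tree with `n ≥ 1` vertices has at most `2^(n-1) + n - 1`
subtrees, and any such tree not isomorphic to `K_{1,n-1}` has strictly fewer. -/
theorem star_maximizes_subtree_count {n : ℕ} (hn : 1 ≤ n) {V : Type*} [Fintype V]
    (G : SimpleGraph V) (hG : G.IsTree) (hcard : Fintype.card V = n) :
    G.subtreeCount ≤ 2 ^ (n - 1) + n - 1 ∧
      (¬ Nonempty (G ≃g _root_.starGraph (⟨0, by omega⟩ : Fin n)) →
        G.subtreeCount < 2 ^ (n - 1) + n - 1) := by
  classical
  have hedge : G.edgeFinset.card = n - 1 := by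
    have := hG.card_edgeFinset
    omega
  have hP1 : 1 ≤ 2 ^ (n - 1) := Nat.one_le_two_pow
  -- the universal bound
  have hbound : G.subtreeCount ≤ 2 ^ (n - 1) + n - 1 := by
    have hle := count_le_aux (G := G) (T := G.edgeFinset.powerset.erase ∅) ?_
    · have hT : (G.edgeFinset.powerset.erase ∅).card = 2 ^ (n - 1) - 1 := by
        rw [Finset.card_erase_of_mem (Finset.empty_mem_powerset _), Finset.card_powerset, hedge]
      rw [hT, hcard] at hle
      omega
    · intro S hS h2
      rw [Finset.mem_erase, Finset.mem_powerset]
      refine ⟨(treeEdges_nonempty hS h2).ne_empty, Finset.filter_subset _ _⟩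
  refine ⟨hbound, fun hniso => ?_⟩
  -- if no two disjoint edges exist, G is a star, contradiction
  by_cases hmeet : ∀ e ∈ G.edgeSet, ∀ f ∈ G.edgeSet, ∃ v, v ∈ e ∧ v ∈ f
  · exfalso
    apply hniso
    have hstar : ∃ c, ∀ x y, G.Adj x y ↔ x ≠ y ∧ (x = c ∨ y = c) := by
      by_cases hE : ∃ a b, G.Adj a b
      · obtain ⟨a, b, hab⟩ := hE
        exact star_structure hG hab hmeet
      · push_neg at hE
        have hsub : ∀ x y : V, x = y := by
          intro x y
          by_contra hne
          obtain ⟨w, hw⟩ := exists_adj_of_connected hG.isConnected hne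
          exact hE x w hw
        have hne : Nonempty V := hG.isConnected.nonempty
        obtain ⟨c⟩ := hne
        exact ⟨c, fun x y => by
          constructor
          · intro h; exact absurd (hsub x y) h.ne
          · rintro ⟨hxy, _⟩; exact absurd (hsub x y) hxy⟩
    obtain ⟨c, hc⟩ := hstar
    let z : Fin n := ⟨0, by omega⟩
    let e := Fintype.equivFinOfCardEq hcard
    let φ : V ≃ Fin n := e.trans (Equiv.swap (e c) z)
    have hφc : φ c = z := by simp [φ, Equiv.swap_apply_left]
    refine ⟨⟨φ, ?_⟩⟩
    intro x y
    show (_root_.starGraph z).Adj (φ x) (φ y) ↔ G.Adj x y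
    rw [hc]
    simp only [_root_.starGraph, SimpleGraph.fromRel_adj, ← hφc, ne_eq,
      EmbeddingLike.apply_eq_iff_eq]
  · -- there are two disjoint edges: strict inequality
    push_neg at hmeet
    obtain ⟨e₁, he₁, e₂, he₂, hd⟩ := hmeet
    have hdisj : ∀ v ∈ e₁, v ∉ e₂ := fun v hv hv2 => hd v hv hv2
    have hne12 : e₁ ≠ e₂ := by
      intro h
      induction e₁ using Sym2.ind with | _ a b => ?_
      exact hdisj a (Sym2.mem_mk_left _ _) (h ▸ Sym2.mem_mk_left _ _)
    -- n ≥ 3 since the tree has at least 2 edges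
    have h2edges : 2 ≤ G.edgeFinset.card := by
      have : ({e₁, e₂} : Finset (Sym2 V)) ⊆ G.edgeFinset := by
        intro e he
        rcases Finset.mem_insert.1 he with rfl | he
        · exact mem_edgeFinset.2 he₁
        · exact mem_edgeFinset.2 (Finset.mem_singleton.1 he ▸ he₂)
      calc 2 = ({e₁, e₂} : Finset (Sym2 V)).card := (Finset.card_pair hne12).symm
        _ ≤ G.edgeFinset.card := Finset.card_le_card this
    have hP2 : 2 ≤ 2 ^ (n - 1) := by
      calc 2 = 2 ^ 1 := rfl
        _ ≤ 2 ^ (n - 1) := Nat.pow_le_pow_right (by norm_num) (by omega)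
    have hle := count_le_aux (G := G)
      (T := (G.edgeFinset.powerset.erase ∅).erase {e₁, e₂}) ?_
    · have hmem : ({e₁, e₂} : Finset (Sym2 V)) ∈ G.edgeFinset.powerset.erase ∅ := by
        rw [Finset.mem_erase, Finset.mem_powerset]
        constructor
        · simp
        · intro e he
          rcases Finset.mem_insert.1 he with rfl | he
          · exact mem_edgeFinset.2 he₁
          · exact mem_edgeFinset.2 (Finset.mem_singleton.1 he ▸ he₂)
      have hT : ((G.edgeFinset.powerset.erase ∅).erase {e₁, e₂}).card
          = 2 ^ (n - 1) - 1 - 1 := by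
        rw [Finset.card_erase_of_mem hmem,
          Finset.card_erase_of_mem (Finset.empty_mem_powerset _), Finset.card_powerset, hedge]
      rw [hT, hcard] at hle
      omega
    · intro S hS h2
      rw [Finset.mem_erase, Finset.mem_erase, Finset.mem_powerset]
      refine ⟨fun h => not_treeEdges_pair hS h2 hdisj h, (treeEdges_nonempty hS h2).ne_empty,
        Finset.filter_subset _ _⟩
end

section
/- Let T = (V, E; f, g) be a weighted tree with n > 1 vertices, let u be a pendant (degree-one) vertex of T with pendant edge e = (u, v), and let T' = (V∖{u}, E∖{e}; f', g') be the weighted tree with f'(v) = f(v)(f(u)g(e) + 1), f'(w) = f(w) for all w ≠ v, and g' the restriction of g. Then F(T; f, g) = F(T'; f', g') + f(u). -/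
open SimpleGraph

/-- The weight of a subtree with vertex set `S`: the product of the weights of its
vertices times the product of the weights of the edges of `G` joining two vertices
of `S`. -/
noncomputable def SimpleGraph.subtreeWeight {V R : Type*} [CommRing R]
    (G : SimpleGraph V) (f : V → R) (g : Sym2 V → R) (S : Finset V) : R :=
  (∏ v ∈ S, f v) * ∏ᶠ e ∈ {e : Sym2 V | e ∈ G.edgeSet ∧ ∀ x ∈ e, x ∈ S}, g e

/-- `F(G; f, g)`: the sum of the weights of all subtrees of `G`. -/
noncomputable def SimpleGraph.subtreeSum {V R : Type*} [CommRing R]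
    (G : SimpleGraph V) (f : V → R) (g : Sym2 V → R) : R :=
  ∑ᶠ S ∈ {S : Finset V | G.IsSubtree S}, G.subtreeWeight f g S

/-- `F(G; f, g; w)`: the sum of the weights of all subtrees of `G` containing `w`. -/
noncomputable def SimpleGraph.subtreeSumAt {V R : Type*} [CommRing R]
    (G : SimpleGraph V) (f : V → R) (g : Sym2 V → R) (w : V) : R :=
  ∑ᶠ S ∈ {S : Finset V | G.IsSubtree S ∧ w ∈ S}, G.subtreeWeight f g S

/-- `F(G; f, g; w₁, w₂)`: the sum of the weights of all subtrees of `G` containing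
both `w₁` and `w₂`. -/
noncomputable def SimpleGraph.subtreeSumAt2 {V R : Type*} [CommRing R]
    (G : SimpleGraph V) (f : V → R) (g : Sym2 V → R) (w₁ w₂ : V) : R :=
  ∑ᶠ S ∈ {S : Finset V | G.IsSubtree S ∧ w₁ ∈ S ∧ w₂ ∈ S}, G.subtreeWeight f g S

set_option linter.unusedSectionVars false
set_option linter.unusedVariables false
set_option linter.unnecessarySimpa false


open SimpleGraph Finset

section AuxPC

variable {V : Type*} [Fintype V] [DecidableEq V]

open Classical in
/-- The edges of `G` with both endpoints in `S`, as a `Finset`. -/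
noncomputable def SimpleGraph.edgesIn (G : SimpleGraph V) (S : Finset V) : Finset (Sym2 V) :=
  G.edgeFinset.filter (fun e => ∀ x ∈ e, x ∈ S)

open Classical in
lemma SimpleGraph.mem_edgesIn {G : SimpleGraph V} {S : Finset V} {e : Sym2 V} :
    e ∈ G.edgesIn S ↔ e ∈ G.edgeSet ∧ ∀ x ∈ e, x ∈ S := by
  simp [edgesIn, mem_filter, mem_edgeFinset]

lemma SimpleGraph.subtreeWeight_eq {R : Type*} [CommRing R] (G : SimpleGraph V)
    (f : V → R) (g : Sym2 V → R) (S : Finset V) :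
    G.subtreeWeight f g S = (∏ w ∈ S, f w) * ∏ e ∈ G.edgesIn S, g e := by
  classical
  unfold subtreeWeight
  congr 1
  rw [show {e : Sym2 V | e ∈ G.edgeSet ∧ ∀ x ∈ e, x ∈ S} = ↑(G.edgesIn S) from ?_,
    finprod_mem_coe_finset]
  ext e
  simp [SimpleGraph.mem_edgesIn]

open Classical in
lemma SimpleGraph.subtreeSum_eq {R : Type*} [CommRing R] (G : SimpleGraph V)
    (f : V → R) (g : Sym2 V → R) :
    G.subtreeSum f g =
      ∑ S ∈ Finset.univ.filter (fun S => G.IsSubtree S), G.subtreeWeight f g S := by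
  unfold subtreeSum
  rw [← finsum_mem_coe_finset]
  congr 1
  ext S
  simp

/-- `toSubgraph` of a walk whose support lies in `s` is at most the induced subgraph. -/
lemma SimpleGraph.Walk.toSubgraph_le_induce_top {G : SimpleGraph V} {s : Set V} {a b : V}
    (p : G.Walk a b) (h : ∀ x ∈ p.support, x ∈ s) :
    p.toSubgraph ≤ (⊤ : G.Subgraph).induce s := by
  constructor
  · rw [p.verts_toSubgraph]
    exact fun x hx => h x hx
  · intro x y hxy
    have hx := hxy.fst_mem
    have hy := hxy.snd_mem
    rw [p.mem_verts_toSubgraph] at hx hy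
    simp only [Subgraph.induce_adj, Subgraph.top_adj]
    exact ⟨h x hx, h y hy, hxy.adj_sub⟩

/-- Walk characterisation of `IsSubtree`. -/
lemma SimpleGraph.isSubtree_iff_walks (G : SimpleGraph V) (S : Finset V) :
    G.IsSubtree S ↔ S.Nonempty ∧
      ∀ a ∈ S, ∀ b ∈ S, ∃ p : G.Walk a b, ∀ x ∈ p.support, x ∈ S := by
  unfold SimpleGraph.IsSubtree
  rw [connected_induce_iff, Subgraph.connected_iff_forall_exists_walk_subgraph]
  simp only [Subgraph.induce_verts, Subgraph.verts_top]
  constructor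
  · rintro ⟨hne, -, hw⟩
    refine ⟨hne, fun a ha b hb => ?_⟩
    obtain ⟨p, hp⟩ := hw (by exact ha) (by exact hb)
    exact ⟨p, fun x hx => by
      have := hp.1 (by rw [p.mem_verts_toSubgraph]; exact hx)
      exact this⟩
  · rintro ⟨hne, hw⟩
    refine ⟨hne, ⟨?_, ?_⟩⟩
    · obtain ⟨a, ha⟩ := hne
      exact ⟨a, by exact ha⟩
    · intro a b ha hb
      obtain ⟨p, hp⟩ := hw a (by exact ha) b (by exact hb)
      exact ⟨p, p.toSubgraph_le_induce_top hp⟩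

end AuxPC
section AuxPC2

open SimpleGraph Finset

variable {V : Type*} [Fintype V] [DecidableEq V] {G : SimpleGraph V} {u v : V}

lemma adj_eq_of_degree_one [DecidableRel G.Adj] (hdeg : G.degree u = 1) (hadj : G.Adj u v)
    {w : V} (h : G.Adj u w) : w = v := by
  have hv : v ∈ G.neighborFinset u := by simpa using hadj
  have hw : w ∈ G.neighborFinset u := by simpa using h
  obtain ⟨a, ha⟩ := Finset.card_eq_one.mp (hdeg : (G.neighborFinset u).card = 1)
  rw [ha, Finset.mem_singleton] at hv hw
  rw [hw, hv]

lemma v_mem_support_tail [DecidableRel G.Adj] (hdeg : G.degree u = 1) (hadj : G.Adj u v)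
    {b : V} (p : G.Walk u b) (hub : u ≠ b) : v ∈ p.support.tail := by
  cases p with
  | nil => exact absurd rfl hub
  | cons h q =>
    have := adj_eq_of_degree_one hdeg hadj h
    subst this
    simpa using q.start_mem_support

/-- Removing a pendant vertex from a subtree keeps it a subtree. -/
lemma isSubtree_erase_of_pendant [DecidableRel G.Adj] (hdeg : G.degree u = 1) (hadj : G.Adj u v)
    {S : Finset V} (hS : G.IsSubtree S) (huS : u ∈ S) (hne : S ≠ {u}) :
    v ∈ S ∧ G.IsSubtree (S.erase u) := by
  rw [G.isSubtree_iff_walks] at hS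
  obtain ⟨hSne, hw⟩ := hS
  obtain ⟨w, hwS, hwu⟩ : ∃ w ∈ S, w ≠ u := by
    by_contra hcon
    push_neg at hcon
    exact hne (Finset.eq_singleton_iff_unique_mem.mpr ⟨huS, hcon⟩)
  have hvS : v ∈ S := by
    obtain ⟨p, hp⟩ := hw u huS w hwS
    exact hp v (List.mem_of_mem_tail (v_mem_support_tail hdeg hadj p (Ne.symm hwu)))
  refine ⟨hvS, ?_⟩
  rw [G.isSubtree_iff_walks]
  refine ⟨⟨w, Finset.mem_erase.mpr ⟨hwu, hwS⟩⟩, ?_⟩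
  intro a ha b hb
  rw [Finset.mem_erase] at ha hb
  obtain ⟨p, hp⟩ := hw a ha.2 b hb.2
  have hq : ∀ x ∈ p.bypass.support, x ∈ S := fun x hx => hp x (p.support_bypass_subset hx)
  have hqpath : p.bypass.IsPath := p.bypass_isPath
  by_cases hu : u ∈ p.bypass.support
  · exfalso
    set q := p.bypass with hqdef
    have hspec := q.take_spec hu
    have hvt : v ∈ (q.takeUntil u hu).support := by
      have := v_mem_support_tail hdeg hadj (q.takeUntil u hu).reverse (Ne.symm ha.1)
      have h2 := List.mem_of_mem_tail this
      rwa [SimpleGraph.Walk.support_reverse, List.mem_reverse] at h2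
    have hvd : v ∈ (q.dropUntil u hu).support.tail :=
      v_mem_support_tail hdeg hadj (q.dropUntil u hu) (Ne.symm hb.1)
    have hnodup : q.support.Nodup := hqpath.support_nodup
    rw [← hspec, SimpleGraph.Walk.support_append, List.nodup_append] at hnodup
    exact hnodup.2.2 v hvt v hvd rfl
  · exact ⟨p.bypass, fun x hx =>
      Finset.mem_erase.mpr ⟨fun h => hu (h ▸ hx), hq x hx⟩⟩

/-- Adding a pendant vertex to a subtree containing its neighbour keeps it a subtree. -/
lemma isSubtree_insert_of_adj (hadj : G.Adj u v) {S : Finset V} (hS : G.IsSubtree S)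
    (hvS : v ∈ S) : G.IsSubtree (insert u S) := by
  obtain ⟨hne, hconn⟩ := hS
  refine ⟨Finset.insert_nonempty u S, ?_⟩
  have h1 : (G.induce ({u, v} : Set V)).Connected := G.induce_pair_connected_of_adj hadj
  have h2 := SimpleGraph.induce_union_connected h1.preconnected hconn.preconnected ⟨v, by simp, by simpa using hvS⟩
  have hset : ({u, v} : Set V) ∪ ↑S = ↑(insert u S) := by
    ext x
    simp only [Set.mem_union, Set.mem_insert_iff, Set.mem_singleton_iff, Finset.coe_insert,
      Finset.mem_coe]
    constructor
    · rintro ((rfl | rfl) | hx)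
      · exact Or.inl rfl
      · exact Or.inr hvS
      · exact Or.inr hx
    · rintro (rfl | hx)
      · exact Or.inl (Or.inl rfl)
      · exact Or.inr hx
  rwa [hset] at h2

end AuxPC2
section AuxPC3

open SimpleGraph Finset

variable {V : Type*} [Fintype V] [DecidableEq V] {G : SimpleGraph V} {u : V}

/-- The isomorphism between a doubly-induced subgraph and the corresponding
singly-induced subgraph. -/
def doubleInduceIso (G : SimpleGraph V) (u : V) (S' : Finset ↥({w : V | w ≠ u})) :
    (G.induce {w : V | w ≠ u}).induce (↑S' : Set _) ≃g
      G.induce (↑(S'.map (Function.Embedding.subtype _)) : Set V) where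
  toFun x := ⟨x.1.1, by
    simp only [Finset.coe_map, Set.mem_image, Finset.mem_coe]
    exact ⟨x.1, x.2, rfl⟩⟩
  invFun y := by
    refine ⟨⟨y.1, ?_⟩, ?_⟩
    · obtain ⟨x, hx, he⟩ := Finset.mem_map.mp (Finset.mem_coe.mp y.2)
      exact he ▸ x.2
    · obtain ⟨x, hx, he⟩ := Finset.mem_map.mp (Finset.mem_coe.mp y.2)
      have : x = ⟨y.1, he ▸ x.2⟩ := Subtype.ext he
      exact Finset.mem_coe.mpr (this ▸ hx)
  left_inv x := Subtype.ext (Subtype.ext rfl)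
  right_inv y := Subtype.ext rfl
  map_rel_iff' := Iff.rfl

lemma isSubtree_map_iff (S' : Finset ↥({w : V | w ≠ u})) :
    (G.induce {w : V | w ≠ u}).IsSubtree S' ↔
      G.IsSubtree (S'.map (Function.Embedding.subtype _)) := by
  unfold SimpleGraph.IsSubtree
  rw [Finset.map_nonempty]
  exact and_congr Iff.rfl (doubleInduceIso G u S').connected_iff

end AuxPC3
section AuxPC4

open SimpleGraph Finset

variable {V : Type*} [Fintype V] [DecidableEq V] {G : SimpleGraph V} {u v : V}

lemma image_edgesIn (S' : Finset ↥({w : V | w ≠ u})) :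
    ((G.induce {w : V | w ≠ u}).edgesIn S').image (Sym2.map Subtype.val) =
      G.edgesIn (S'.map (Function.Embedding.subtype _)) := by
  ext e
  simp only [Finset.mem_image]
  constructor
  · rintro ⟨e', he', rfl⟩
    induction e' using Sym2.ind with
    | _ a b =>
      rw [SimpleGraph.mem_edgesIn] at he'
      obtain ⟨hadj', hmem⟩ := he'
      rw [SimpleGraph.mem_edgeSet, comap_adj] at hadj'
      rw [Sym2.map_pair_eq, SimpleGraph.mem_edgesIn, SimpleGraph.mem_edgeSet]
      refine ⟨hadj', ?_⟩
      intro x hx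
      rw [Sym2.mem_iff] at hx
      rcases hx with rfl | rfl
      · exact Finset.mem_map.mpr ⟨a, hmem a (Sym2.mem_mk_left a b), rfl⟩
      · exact Finset.mem_map.mpr ⟨b, hmem b (Sym2.mem_mk_right a b), rfl⟩
  · intro he
    induction e using Sym2.ind with
    | _ a b =>
      rw [SimpleGraph.mem_edgesIn, SimpleGraph.mem_edgeSet] at he
      obtain ⟨hadj', hmem⟩ := he
      obtain ⟨a', ha', rfl⟩ := Finset.mem_map.mp (hmem a (Sym2.mem_mk_left a b))
      obtain ⟨b', hb', rfl⟩ := Finset.mem_map.mp (hmem b (Sym2.mem_mk_right _ _))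
      refine ⟨s(a', b'), ?_, rfl⟩
      rw [SimpleGraph.mem_edgesIn, SimpleGraph.mem_edgeSet, comap_adj]
      refine ⟨hadj', ?_⟩
      intro x hx
      rw [Sym2.mem_iff] at hx
      rcases hx with rfl | rfl
      · exact ha'
      · exact hb'

lemma edgesIn_insert_pendant [DecidableRel G.Adj] (hdeg : G.degree u = 1) (hadj : G.Adj u v)
    {S : Finset V} (hvS : v ∈ S) (huS : u ∉ S) :
    G.edgesIn (insert u S) = insert s(u, v) (G.edgesIn S) := by
  ext e
  rw [Finset.mem_insert, SimpleGraph.mem_edgesIn]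
  constructor
  · rintro ⟨hedge, hmem⟩
    induction e using Sym2.ind with
    | _ a b =>
      rw [SimpleGraph.mem_edgeSet] at hedge
      by_cases hu : u ∈ s(a, b)
      · left
        rw [Sym2.mem_iff] at hu
        rcases hu with rfl | rfl
        · have := adj_eq_of_degree_one hdeg hadj hedge
          rw [this]
        · have := adj_eq_of_degree_one hdeg hadj hedge.symm
          rw [this, Sym2.eq_swap]
      · right
        rw [SimpleGraph.mem_edgesIn, SimpleGraph.mem_edgeSet]
        refine ⟨hedge, fun x hx => ?_⟩
        have hxS := hmem x hx
        rw [Finset.mem_insert] at hxS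
        rcases hxS with rfl | hxS
        · exact absurd hx hu
        · exact hxS
  · rintro (rfl | he)
    · refine ⟨hadj, ?_⟩
      intro x hx
      rw [Sym2.mem_iff] at hx
      rcases hx with rfl | rfl
      · exact Finset.mem_insert_self x S
      · exact Finset.mem_insert_of_mem hvS
    · rw [SimpleGraph.mem_edgesIn] at he
      exact ⟨he.1, fun x hx => Finset.mem_insert_of_mem (he.2 x hx)⟩

lemma suv_not_mem_edgesIn {S : Finset V} (huS : u ∉ S) : s(u, v) ∉ G.edgesIn S := by
  intro h
  rw [SimpleGraph.mem_edgesIn] at h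
  exact huS (h.2 u (Sym2.mem_mk_left u v))

lemma edgesIn_singleton (w : V) : G.edgesIn {w} = ∅ := by
  ext e
  induction e using Sym2.ind with
  | _ a b =>
    simp only [Finset.notMem_empty, iff_false, SimpleGraph.mem_edgesIn, SimpleGraph.mem_edgeSet]
    rintro ⟨hadj', hmem⟩
    have ha := Finset.mem_singleton.mp (hmem a (Sym2.mem_mk_left a b))
    have hb := Finset.mem_singleton.mp (hmem b (Sym2.mem_mk_right a b))
    exact G.ne_of_adj hadj' (ha.trans hb.symm)

end AuxPC4

/-- Pendant contraction for the subtree generating function. Let `u` be a pendant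
vertex of a weighted tree `G` with pendant edge `(u, v)`, and let `T'` be the tree
obtained by deleting `u` (the induced subgraph on `{w | w ≠ u}`) with the new
vertex-weight `f'` satisfying `f' v = f v * (f u * g s(u,v) + 1)` and `f' w = f w`
elsewhere, and edge weights inherited from `g`. Then
`F(T; f, g) = F(T'; f', g') + f u`. -/
theorem subtreeSum_pendant_contraction {V R : Type*} [Fintype V] [DecidableEq V]
    [CommRing R] (G : SimpleGraph V) [DecidableRel G.Adj]
    (hG : G.IsTree) (hn : 1 < Fintype.card V)
    (u v : V) (hdeg : G.degree u = 1) (hadj : G.Adj u v) (hvu : v ≠ u)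
    (f : V → R) (g : Sym2 V → R)
    (f' : {w : V // w ≠ u} → R)
    (hf'v : f' ⟨v, hvu⟩ = f v * (f u * g s(u, v) + 1))
    (hf'other : ∀ w : {w : V // w ≠ u}, (w : V) ≠ v → f' w = f (w : V)) :
    G.subtreeSum f g =
      (G.induce {w : V | w ≠ u}).subtreeSum f' (fun e => g (e.map Subtype.val)) + f u := by
  classical
  rw [G.subtreeSum_eq f g, SimpleGraph.subtreeSum_eq (G.induce {w : V | w ≠ u}) f' (fun e => g (e.map Subtype.val))]
  set G' := G.induce {w : V | w ≠ u} with hG'def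
  set g' : Sym2 ↥({w : V | w ≠ u}) → R := fun e => g (e.map Subtype.val) with hg'def
  set emb : ↥({w : V | w ≠ u}) ↪ V := Function.Embedding.subtype _ with hembdef
  set φ : Finset ↥({w : V | w ≠ u}) → Finset V := fun S' => S'.map emb with hφdef
  set ψ : Finset V → Finset ↥({w : V | w ≠ u}) :=
    fun S => S.subtype (fun w => w ∈ {w : V | w ≠ u}) with hψdef
  set v' : ↥({w : V | w ≠ u}) := ⟨v, hvu⟩ with hv'def
  -- basic facts about φ and ψ
  have hu_notmem : ∀ S', u ∉ φ S' := by
    intro S' h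
    obtain ⟨y, hy, he⟩ := Finset.mem_map.mp h
    exact y.2 he
  have hv_mem : ∀ S', v ∈ φ S' ↔ v' ∈ S' := by
    intro S'
    constructor
    · intro h
      obtain ⟨y, hy, he⟩ := Finset.mem_map.mp h
      have : y = v' := Subtype.ext he
      exact this ▸ hy
    · intro h
      exact Finset.mem_map.mpr ⟨v', h, rfl⟩
  have hφψ₂ : ∀ S : Finset V, φ (ψ S) = S.erase u := by
    intro S
    ext x
    simp only [hφdef, hψdef, Finset.mem_map, Finset.mem_subtype, Finset.mem_erase,
      hembdef, Function.Embedding.coe_subtype]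
    constructor
    · rintro ⟨y, hy, rfl⟩
      exact ⟨y.2, hy⟩
    · rintro ⟨hxu, hx⟩
      exact ⟨⟨x, hxu⟩, hx, rfl⟩
  have hφψ₁ : ∀ S : Finset V, u ∉ S → φ (ψ S) = S := by
    intro S huS
    rw [hφψ₂ S, Finset.erase_eq_of_notMem huS]
  have hψφ : ∀ S', ψ (φ S') = S' := by
    intro S'
    ext x
    simp only [hψdef, Finset.mem_subtype]
    constructor
    · intro hx
      obtain ⟨y, hy, he⟩ := Finset.mem_map.mp hx
      exact (Subtype.ext he : y = x) ▸ hy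
    · intro hx
      exact Finset.mem_map.mpr ⟨x, hx, rfl⟩
  have hψins : ∀ X : Finset V, ψ (insert u X) = ψ X := by
    intro X
    ext x
    simp only [hψdef, Finset.mem_subtype, Finset.mem_insert]
    have := x.2
    constructor
    · rintro (h | h)
      · exact absurd h this
      · exact h
    · exact Or.inr
  have hsub : ∀ S', G'.IsSubtree S' ↔ G.IsSubtree (φ S') := fun S' => isSubtree_map_iff S'
  -- weight computations
  have hedgeprod : ∀ S', (∏ e ∈ G.edgesIn (φ S'), g e) = ∏ e ∈ G'.edgesIn S', g' e := by
    intro S'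
    rw [hφdef]
    rw [← image_edgesIn S', Finset.prod_image
      (fun a _ b _ hab => Sym2.map.injective Subtype.val_injective hab)]
  have hvert : ∀ S', (∏ w ∈ φ S', f w) = ∏ w ∈ S', f (w : V) := by
    intro S'
    rw [hφdef, Finset.prod_map]
    rfl
  -- pointwise weight relations
  have hpt : ∀ S', G'.subtreeWeight f' g' S' =
      G.subtreeWeight f g (φ S') +
        (if v' ∈ S' then (f u * g s(u, v)) * G.subtreeWeight f g (φ S') else 0) := by
    intro S'
    rw [G'.subtreeWeight_eq f' g' S', (G).subtreeWeight_eq f g (φ S'), ← hedgeprod, hvert]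
    by_cases hvS : v' ∈ S'
    · rw [if_pos hvS]
      have h1 : (∏ w ∈ S', f' w) = f' v' * ∏ w ∈ S'.erase v', f' w :=
        (Finset.mul_prod_erase S' f' hvS).symm
      have h2 : (∏ w ∈ S'.erase v', f' w) = ∏ w ∈ S'.erase v', f (w : V) := by
        apply Finset.prod_congr rfl
        intro w hw
        refine hf'other w ?_
        intro hwv
        exact (Finset.mem_erase.mp hw).1 (Subtype.ext hwv)
      have h3 : (∏ w ∈ S', f (w : V)) = f v * ∏ w ∈ S'.erase v', f (w : V) :=
        (Finset.mul_prod_erase S' _ hvS).symm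
      rw [h1, h2, hf'v, h3]
      ring
    · rw [if_neg hvS, add_zero]
      congr 1
      apply Finset.prod_congr rfl
      intro w hw
      refine hf'other w ?_
      intro hwv
      exact hvS ((Subtype.ext hwv : w = v') ▸ hw)
  have hins : ∀ S', v' ∈ S' →
      G.subtreeWeight f g (insert u (φ S')) =
        (f u * g s(u, v)) * G.subtreeWeight f g (φ S') := by
    intro S' hvS
    rw [G.subtreeWeight_eq f g, G.subtreeWeight_eq f g]
    rw [edgesIn_insert_pendant hdeg hadj ((hv_mem S').mpr hvS) (hu_notmem S')]
    rw [Finset.prod_insert (hu_notmem S'), Finset.prod_insert (suv_not_mem_edgesIn (hu_notmem S'))]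
    ring
  -- the singleton subtree {u}
  have hsingle : G.IsSubtree ({u} : Finset V) := by
    refine ⟨Finset.singleton_nonempty u, ?_⟩
    have hall : ∀ a b : ↥((({u} : Finset V) : Set V)), a = b := by
      rintro ⟨a, ha⟩ ⟨b, hb⟩
      simp only [Finset.coe_singleton, Set.mem_singleton_iff] at ha hb
      subst ha; subst hb; rfl
    haveI : Nonempty ↥((({u} : Finset V) : Set V)) := ⟨⟨u, by simp⟩⟩
    exact ⟨fun a b => (hall a b) ▸ SimpleGraph.Reachable.refl a⟩
  have hwu : G.subtreeWeight f g {u} = f u := by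
    rw [G.subtreeWeight_eq f g, edgesIn_singleton, Finset.prod_singleton, Finset.prod_empty,
      mul_one]
  -- now the sums
  set A : Finset (Finset V) := Finset.univ.filter (fun S => G.IsSubtree S) with hA
  set B : Finset (Finset ↥({w : V | w ≠ u})) := Finset.univ.filter (fun S' => G'.IsSubtree S')
    with hB
  -- split A by membership of u
  rw [← Finset.sum_filter_add_sum_filter_not A (fun S => u ∈ S) (G.subtreeWeight f g)]
  -- {u} belongs to the first part
  have hmem_u : ({u} : Finset V) ∈ A.filter (fun S => u ∈ S) := by
    simp only [hA, Finset.mem_filter, Finset.mem_univ, true_and]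
    exact ⟨hsingle, Finset.mem_singleton_self u⟩
  rw [← Finset.add_sum_erase _ _ hmem_u, hwu]
  -- bijection for subtrees avoiding u
  have hbij1 : ∑ S ∈ A.filter (fun S => ¬ u ∈ S), G.subtreeWeight f g S =
      ∑ S' ∈ B, G.subtreeWeight f g (φ S') := by
    refine Finset.sum_nbij' ψ φ ?_ ?_ ?_ ?_ ?_
    · intro S hS
      simp only [hA, Finset.mem_filter, Finset.mem_univ, true_and] at hS
      simp only [hB, Finset.mem_filter, Finset.mem_univ, true_and]
      rw [hsub, hφψ₁ S hS.2]
      exact hS.1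
    · intro S' hS'
      simp only [hB, Finset.mem_filter, Finset.mem_univ, true_and] at hS'
      simp only [hA, Finset.mem_filter, Finset.mem_univ, true_and]
      exact ⟨(hsub S').mp hS', hu_notmem S'⟩
    · intro S hS
      simp only [hA, Finset.mem_filter, Finset.mem_univ, true_and] at hS
      rw [hφψ₁ S hS.2]
    · intro S' _
      exact hψφ S'
    · intro S hS
      simp only [hA, Finset.mem_filter, Finset.mem_univ, true_and] at hS
      rw [hφψ₁ S hS.2]
  -- bijection for subtrees containing u (other than {u})
  have hbij2 : ∑ S ∈ (A.filter (fun S => u ∈ S)).erase {u}, G.subtreeWeight f g S =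
      ∑ S' ∈ B.filter (fun S' => v' ∈ S'), G.subtreeWeight f g (insert u (φ S')) := by
    refine Finset.sum_nbij' ψ (fun S' => insert u (φ S')) ?_ ?_ ?_ ?_ ?_
    · intro S hS
      rw [Finset.mem_erase, Finset.mem_filter] at hS
      obtain ⟨hSne, hSA, huS⟩ := hS
      simp only [hA, Finset.mem_filter, Finset.mem_univ, true_and] at hSA
      obtain ⟨hvS, herase⟩ := isSubtree_erase_of_pendant hdeg hadj hSA huS hSne
      simp only [hB, Finset.mem_filter, Finset.mem_univ, true_and]
      constructor
      · rw [hsub, hφψ₂ S]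
        exact herase
      · simp only [hψdef, Finset.mem_subtype]
        exact hvS
    · intro S' hS'
      simp only [hB, Finset.mem_filter, Finset.mem_univ, true_and] at hS'
      obtain ⟨hS'sub, hv'S'⟩ := hS'
      rw [Finset.mem_erase, Finset.mem_filter]
      have hvφ : v ∈ φ S' := (hv_mem S').mpr hv'S'
      refine ⟨?_, ?_, Finset.mem_insert_self u _⟩
      · intro hcon
        have : v ∈ ({u} : Finset V) := hcon ▸ (Finset.mem_insert_of_mem hvφ)
        exact hvu (Finset.mem_singleton.mp this)
      · simp only [hA, Finset.mem_filter, Finset.mem_univ, true_and]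
        exact isSubtree_insert_of_adj hadj ((hsub S').mp hS'sub) hvφ
    · intro S hS
      rw [Finset.mem_erase, Finset.mem_filter] at hS
      show insert u (φ (ψ S)) = S
      rw [hφψ₂ S, Finset.insert_erase hS.2.2]
    · intro S' _
      show ψ (insert u (φ S')) = S'
      rw [hψins, hψφ]
    · intro S hS
      rw [Finset.mem_erase, Finset.mem_filter] at hS
      show G.subtreeWeight f g S = G.subtreeWeight f g (insert u (φ (ψ S)))
      rw [hφψ₂ S, Finset.insert_erase hS.2.2]
  rw [hbij1, hbij2]
  -- right-hand side
  have hrhs : ∑ S' ∈ B, G'.subtreeWeight f' g' S' =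
      (∑ S' ∈ B, G.subtreeWeight f g (φ S')) +
        ∑ S' ∈ B.filter (fun S' => v' ∈ S'), G.subtreeWeight f g (insert u (φ S')) := by
    rw [Finset.sum_congr rfl (fun S' _ => hpt S'), Finset.sum_add_distrib]
    congr 1
    conv_rhs => rw [Finset.sum_filter]
    refine Finset.sum_congr rfl (fun S' _ => ?_)
    split_ifs with h
    · exact (hins S' h).symm
    · rfl
  rw [hrhs]
  ring
end

section
/- Let T = (V, E; f, g) be a weighted tree with n > 1 vertices, let u be a pendant (degree-one) vertex of T with pendant edge e = (u, v), and let T' = (V∖{u}, E∖{e}; f', g') be the weighted tree with f'(v) = f(v)(f(u)g(e) + 1), f'(w) = f(w) for all w ≠ v, and g' the restriction of g. Then for every vertex w ≠ u of T, F(T; f, g; w) = F(T'; f', g'; w). -/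
open SimpleGraph

lemma induce_connected_iff_walks {V : Type*} {G : SimpleGraph V} (s : Set V) :
    (G.induce s).Connected ↔ s.Nonempty ∧
      ∀ x ∈ s, ∀ y ∈ s, ∃ p : G.Walk x y, ∀ z ∈ p.support, z ∈ s := by
  rw [connected_induce_iff, Subgraph.connected_iff_forall_exists_walk_subgraph]
  simp only [Subgraph.induce_verts, Subgraph.verts_top]
  constructor
  · rintro ⟨hne, h⟩
    refine ⟨hne, fun x hx y hy => ?_⟩
    obtain ⟨p, hp⟩ := h hx hy
    exact ⟨p, fun z hz => by
      have := hp.1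
      simpa using this (by simpa [Walk.verts_toSubgraph] using hz)⟩
  · rintro ⟨hne, h⟩
    refine ⟨hne, fun {x y} hx hy => ?_⟩
    obtain ⟨p, hp⟩ := h x hx y hy
    exact ⟨p, le_trans p.toSubgraph_le_induce_support
      (Subgraph.induce_mono le_rfl (fun z hz => hp z hz))⟩

lemma leaf_not_mem_path_support {V : Type*} {G : SimpleGraph V} {u v x y : V}
    (hnb : ∀ z, G.Adj u z → z = v) (hx : x ≠ u) (hy : y ≠ u)
    (q : G.Walk x y) (hq : q.IsPath) : u ∉ q.support := by
  intro hu
  obtain ⟨a, b, rfl⟩ := SimpleGraph.Walk.mem_support_iff_exists_append.mp hu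
  obtain ⟨c, h, r, har⟩ := SimpleGraph.Walk.exists_eq_cons_of_ne (Ne.symm hy) b
  have hvb : c ∈ b.support.tail := by
    rw [har]
    simp only [SimpleGraph.Walk.support_cons, List.tail_cons]
    exact r.start_mem_support
  obtain ⟨d, h', s, has⟩ := SimpleGraph.Walk.exists_eq_cons_of_ne (Ne.symm hx) a.reverse
  have hva : d ∈ a.support := by
    have : d ∈ a.reverse.support := by
      rw [has]; simp only [SimpleGraph.Walk.support_cons]
      exact List.mem_cons_of_mem _ s.start_mem_support
    rwa [SimpleGraph.Walk.support_reverse, List.mem_reverse] at this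
  have hcd : d = c := (hnb d h').trans (hnb c h).symm
  rw [hcd] at hva
  have hnd := hq.support_nodup
  rw [SimpleGraph.Walk.support_append] at hnd
  exact List.disjoint_of_nodup_append hnd hva hvb

lemma mem_of_subtree_leaf {V : Type*} {G : SimpleGraph V} {u v : V}
    (hnb : ∀ z, G.Adj u z → z = v) {S : Set V}
    (hc : (G.induce S).Connected) (huS : u ∈ S) {w : V} (hwS : w ∈ S) (hwu : w ≠ u) :
    v ∈ S := by
  rw [induce_connected_iff_walks] at hc
  obtain ⟨p, hp⟩ := hc.2 u huS w hwS
  obtain ⟨c, h, r, heq⟩ := SimpleGraph.Walk.exists_eq_cons_of_ne (Ne.symm hwu) p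
  have hcv := hnb c h
  have hcS : c ∈ S := hp c (by
    rw [heq, SimpleGraph.Walk.support_cons]
    exact List.mem_cons_of_mem _ r.start_mem_support)
  rwa [hcv] at hcS

lemma conn_erase {V : Type*} [DecidableEq V] {G : SimpleGraph V} {u v : V}
    (hnb : ∀ z, G.Adj u z → z = v) {S : Finset V}
    (hc : (G.induce (S : Set V)).Connected) {w : V} (hwS : w ∈ S) (hwu : w ≠ u) :
    (G.induce ((S.erase u : Finset V) : Set V)).Connected := by
  rw [induce_connected_iff_walks] at hc ⊢
  refine ⟨⟨w, by simp [hwS, hwu]⟩, ?_⟩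
  intro x hx y hy
  simp only [Finset.coe_erase, Set.mem_diff, Set.mem_singleton_iff, Finset.mem_coe] at hx hy
  obtain ⟨p, hp⟩ := hc.2 x hx.1 y hy.1
  refine ⟨p.bypass, fun z hz => ?_⟩
  have hzS : z ∈ S := hp z (p.support_bypass_subset hz)
  have hzu : z ≠ u := by
    rintro rfl
    exact leaf_not_mem_path_support hnb hx.2 hy.2 p.bypass p.bypass_isPath hz
  simp [hzS, hzu]

lemma conn_insert {V : Type*} [DecidableEq V] {G : SimpleGraph V} {u v : V}
    (hadj : G.Adj u v) {S : Finset V}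
    (hc : (G.induce (S : Set V)).Connected) (hvS : v ∈ S) :
    (G.induce ((insert u S : Finset V) : Set V)).Connected := by
  have hsingle : (G.induce ({u} : Set V)).Connected := by
    haveI : Nonempty ({u} : Set V) := ⟨⟨u, rfl⟩⟩
    refine ⟨fun a b => ?_⟩
    rw [Subsingleton.elim a b]
  have := SimpleGraph.connected_induce_union hc.preconnected hsingle.preconnected hvS rfl hadj.symm
  rwa [Finset.coe_insert, Set.insert_eq, Set.union_comm]

section ImageLemmas
variable {V : Type*} [DecidableEq V] {G : SimpleGraph V} {u : V}

lemma ne_of_val_mem_image {St : Finset {x : V // x ≠ u}} {b : V}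
    (hb : b ∈ St.image Subtype.val) : b ≠ u := by
  obtain ⟨a, _, hav⟩ := Finset.mem_image.mp hb
  exact hav ▸ a.2

lemma mem_of_val_mem_image {St : Finset {x : V // x ≠ u}} {b : V}
    (hb : b ∈ St.image Subtype.val) (h : b ≠ u) : (⟨b, h⟩ : {x : V // x ≠ u}) ∈ St := by
  obtain ⟨a, ha, hav⟩ := Finset.mem_image.mp hb
  rwa [show (⟨b, h⟩ : {x : V // x ≠ u}) = a from Subtype.ext hav.symm]

/-- Iso between induced-on-subtype-finset and induced-on-image-finset. -/
def induceImageIso (St : Finset {x : V // x ≠ u}) :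
    (G.induce {x : V | x ≠ u}).induce (St : Set {x : V // x ≠ u}) ≃g
      G.induce ((St.image Subtype.val : Finset V) : Set V) where
  toFun := fun a => ⟨a.1.1, Finset.mem_coe.mpr (Finset.mem_image.mpr ⟨a.1, a.2, rfl⟩)⟩
  invFun := fun b =>
    ⟨⟨b.1, ne_of_val_mem_image (Finset.mem_coe.mp b.2)⟩,
      mem_of_val_mem_image (Finset.mem_coe.mp b.2) _⟩
  left_inv := fun a => Subtype.ext (Subtype.ext rfl)
  right_inv := fun b => Subtype.ext rfl
  map_rel_iff' := Iff.rfl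

lemma isSubtree_image_iff (St : Finset {x : V // x ≠ u}) :
    G.IsSubtree (St.image Subtype.val) ↔ (G.induce {x : V | x ≠ u}).IsSubtree St := by
  unfold SimpleGraph.IsSubtree
  rw [← (induceImageIso (G := G) St).connected_iff]
  simp [Finset.image_nonempty]
  exact fun _ => Iff.rfl

end ImageLemmas

section Weights
variable {V R : Type*} [Fintype V] [DecidableEq V] [CommRing R]
  {G : SimpleGraph V} {u v : V}

lemma edgeSet_insert_leaf (hnb : ∀ z, G.Adj u z → z = v) (hadj : G.Adj u v)
    {S : Finset V} (hvS : v ∈ S) :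
    {e : Sym2 V | e ∈ G.edgeSet ∧ ∀ x ∈ e, x ∈ insert u S} =
      insert s(u, v) {e : Sym2 V | e ∈ G.edgeSet ∧ ∀ x ∈ e, x ∈ S} := by
  ext e
  induction e with
  | _ a b =>
    simp only [Set.mem_setOf_eq, Set.mem_insert_iff, Sym2.mem_iff, Finset.mem_insert,
      SimpleGraph.mem_edgeSet]
    constructor
    · rintro ⟨hab, hmem⟩
      by_cases hua : a = u
      · subst hua
        left
        rw [hnb b hab]
      by_cases hub : b = u
      · subst hub
        left
        rw [hnb a hab.symm, Sym2.eq_swap]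
      · right
        refine ⟨hab, fun x hx => (hmem x hx).resolve_left ?_⟩
        rintro rfl
        rcases hx with h1 | h1
        · exact hua h1.symm
        · exact hub h1.symm
    · rintro (heq | ⟨hab, hmem⟩)
      · rw [Sym2.eq_iff] at heq
        rcases heq with ⟨rfl, rfl⟩ | ⟨rfl, rfl⟩
        · exact ⟨hadj, fun x hx => by rcases hx with rfl | rfl <;> simp [hvS]⟩
        · exact ⟨hadj.symm, fun x hx => by rcases hx with rfl | rfl <;> simp [hvS]⟩
      · exact ⟨hab, fun x hx => Or.inr (hmem x hx)⟩

lemma subtreeWeight_insert (hnb : ∀ z, G.Adj u z → z = v) (hadj : G.Adj u v)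
    (f : V → R) (g : Sym2 V → R) {S : Finset V} (huS : u ∉ S) (hvS : v ∈ S) :
    G.subtreeWeight f g (insert u S) = f u * g s(u, v) * G.subtreeWeight f g S := by
  unfold SimpleGraph.subtreeWeight
  rw [Finset.prod_insert huS, edgeSet_insert_leaf hnb hadj hvS,
    finprod_mem_insert g (by
      simp only [Set.mem_setOf_eq, not_and]
      intro _ h
      exact absurd (h u (Sym2.mem_mk_left u v)) huS)
      (Set.toFinite _)]
  ring

end Weights

section W2
variable {V R : Type*} [DecidableEq V] [CommRing R] {G : SimpleGraph V} {u : V}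

lemma edge_image_eq (St : Finset {x : V // x ≠ u}) :
    (Sym2.map Subtype.val) '' {e : Sym2 {x : V // x ≠ u} |
        e ∈ (G.induce {x : V | x ≠ u}).edgeSet ∧ ∀ x ∈ e, x ∈ St} =
      {e : Sym2 V | e ∈ G.edgeSet ∧ ∀ x ∈ e, x ∈ St.image Subtype.val} := by
  ext e
  constructor
  · rintro ⟨e', ⟨he', hmem⟩, rfl⟩
    induction e' with
    | _ a b =>
      refine ⟨?_, ?_⟩
      · rw [Sym2.map_pair_eq, SimpleGraph.mem_edgeSet]
        exact he'
      · rw [Sym2.map_pair_eq]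
        intro x hx
        rw [Sym2.mem_iff] at hx
        rcases hx with rfl | rfl
        · exact Finset.mem_image.mpr ⟨a, hmem a (Sym2.mem_mk_left a b), rfl⟩
        · exact Finset.mem_image.mpr ⟨b, hmem b (Sym2.mem_mk_right a b), rfl⟩
  · induction e with
    | _ x y =>
      rintro ⟨he, hmem⟩
      rw [SimpleGraph.mem_edgeSet] at he
      have hx := hmem x (Sym2.mem_mk_left x y)
      have hy := hmem y (Sym2.mem_mk_right x y)
      refine ⟨s(⟨x, ne_of_val_mem_image hx⟩, ⟨y, ne_of_val_mem_image hy⟩), ⟨?_, ?_⟩, ?_⟩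
      · exact he
      · intro z hz
        rw [Sym2.mem_iff] at hz
        rcases hz with rfl | rfl
        · exact mem_of_val_mem_image hx _
        · exact mem_of_val_mem_image hy _
      · rw [Sym2.map_pair_eq]

lemma subtreeWeight_image (f' : {x : V // x ≠ u} → R) (g : Sym2 V → R)
    (St : Finset {x : V // x ≠ u}) :
    (G.induce {x : V | x ≠ u}).subtreeWeight f' (fun e => g (e.map Subtype.val)) St =
      (∏ x ∈ St, f' x) *
        ∏ᶠ e ∈ {e : Sym2 V | e ∈ G.edgeSet ∧ ∀ x ∈ e, x ∈ St.image Subtype.val}, g e := by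
  unfold SimpleGraph.subtreeWeight
  congr 1
  rw [← edge_image_eq (G := G) St,
    finprod_mem_image (f := g) ((Sym2.map.injective Subtype.val_injective).injOn)]
  rfl

end W2

/-- Pendant contraction for the subtree generating function rooted at a vertex.
With `T'` the weighted tree obtained from `T` by deleting the pendant vertex `u`
(with pendant edge `(u,v)`) and reweighting `v` by `f' v = f v * (f u * g s(u,v) + 1)`,
we have `F(T; f, g; w) = F(T'; f', g'; w)` for every vertex `w ≠ u`. -/
theorem subtreeSumAt_pendant_contraction {V R : Type*} [Fintype V] [DecidableEq V]
    [CommRing R] (G : SimpleGraph V) [DecidableRel G.Adj]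
    (hG : G.IsTree) (hn : 1 < Fintype.card V)
    (u v : V) (hdeg : G.degree u = 1) (hadj : G.Adj u v) (hvu : v ≠ u)
    (f : V → R) (g : Sym2 V → R)
    (f' : {w : V // w ≠ u} → R)
    (hf'v : f' ⟨v, hvu⟩ = f v * (f u * g s(u, v) + 1))
    (hf'other : ∀ w : {w : V // w ≠ u}, (w : V) ≠ v → f' w = f (w : V))
    (w : V) (hw : w ≠ u) :
    G.subtreeSumAt f g w =
      (G.induce {w : V | w ≠ u}).subtreeSumAt f' (fun e => g (e.map Subtype.val))
        ⟨w, hw⟩ := by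
  classical
  -- u's unique neighbor is v
  have hnb : ∀ z, G.Adj u z → z = v := by
    intro z hz
    have hcard : (G.neighborFinset u).card = 1 := hdeg
    obtain ⟨a, ha⟩ := Finset.card_eq_one.mp hcard
    have hv : v ∈ G.neighborFinset u := by simpa using hadj
    have hz' : z ∈ G.neighborFinset u := by simpa using hz
    rw [ha, Finset.mem_singleton] at hv hz'
    rw [hz', hv]
  -- finset versions of the sums
  set 𝒜 : Finset (Finset V) :=
    Finset.univ.filter (fun S => G.IsSubtree S ∧ w ∈ S) with h𝒜
  set ℬ : Finset (Finset V) :=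
    Finset.univ.filter (fun S => G.IsSubtree S ∧ w ∈ S ∧ u ∉ S) with hℬ
  set 𝒞 : Finset (Finset {x : V // x ≠ u}) :=
    Finset.univ.filter (fun St => (G.induce {x : V | x ≠ u}).IsSubtree St ∧
      ⟨w, hw⟩ ∈ St) with h𝒞
  have hL : G.subtreeSumAt f g w = ∑ S ∈ 𝒜, G.subtreeWeight f g S := by
    rw [SimpleGraph.subtreeSumAt,
      show {S : Finset V | G.IsSubtree S ∧ w ∈ S} = (↑𝒜 : Set (Finset V)) by
        ext S; simp [h𝒜],
      finsum_mem_coe_finset]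
  have hR : (G.induce {w : V | w ≠ u}).subtreeSumAt f'
      (fun e => g (e.map Subtype.val)) ⟨w, hw⟩ =
      ∑ St ∈ 𝒞, (G.induce {x : V | x ≠ u}).subtreeWeight f'
        (fun e => g (e.map Subtype.val)) St := by
    rw [SimpleGraph.subtreeSumAt, ← finsum_mem_coe_finset]
    congr 1
    ext St
    simp [h𝒞]
  rw [hL, hR]
  -- split LHS on u ∈ S
  rw [← Finset.sum_filter_add_sum_filter_not 𝒜 (fun S => u ∈ S)]
  -- the u ∉ S part is ℬ
  have hBeq : 𝒜.filter (fun S => ¬ u ∈ S) = ℬ := by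
    ext S; simp [h𝒜, hℬ, and_assoc]
  -- the u ∈ S part maps to sums over ℬ ∩ {v ∈ S}
  have hstep1 : ∑ S ∈ 𝒜.filter (fun S => u ∈ S), G.subtreeWeight f g S =
      ∑ S ∈ ℬ.filter (fun S => v ∈ S),
        f u * g s(u, v) * G.subtreeWeight f g S := by
    refine Finset.sum_bij' (fun S _ => S.erase u) (fun S _ => insert u S) ?_ ?_ ?_ ?_ ?_
    · intro S hS
      simp only [h𝒜, Finset.mem_filter, Finset.mem_univ, true_and] at hS
      obtain ⟨⟨⟨hne, hconn⟩, hwS⟩, huS⟩ := hS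
      have hvS : v ∈ S := mem_of_subtree_leaf hnb hconn huS hwS hw
      simp only [hℬ, Finset.mem_filter, Finset.mem_univ, true_and]
      refine ⟨⟨⟨⟨w, Finset.mem_erase.mpr ⟨hw, hwS⟩⟩,
        conn_erase hnb hconn hwS hw⟩, Finset.mem_erase.mpr ⟨hw, hwS⟩,
        Finset.notMem_erase u S⟩, Finset.mem_erase.mpr ⟨hvu, hvS⟩⟩
    · intro S hS
      simp only [hℬ, Finset.mem_filter, Finset.mem_univ, true_and] at hS
      obtain ⟨⟨⟨hne, hconn⟩, hwS, huS⟩, hvS⟩ := hS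
      simp only [h𝒜, Finset.mem_filter, Finset.mem_univ, true_and]
      exact ⟨⟨⟨⟨w, Finset.mem_insert_of_mem hwS⟩, conn_insert hadj hconn hvS⟩,
        Finset.mem_insert_of_mem hwS⟩, Finset.mem_insert_self u S⟩
    · intro S hS
      simp only [h𝒜, Finset.mem_filter] at hS
      exact Finset.insert_erase hS.2
    · intro S hS
      simp only [hℬ, Finset.mem_filter, Finset.mem_univ, true_and] at hS
      exact Finset.erase_insert hS.1.2.2
    · intro S hS
      simp only [h𝒜, Finset.mem_filter, Finset.mem_univ, true_and] at hS
      obtain ⟨⟨⟨hne, hconn⟩, hwS⟩, huS⟩ := hS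
      have hvS : v ∈ S := mem_of_subtree_leaf hnb hconn huS hwS hw
      conv_lhs => rw [← Finset.insert_erase huS]
      exact subtreeWeight_insert hnb hadj f g (Finset.notMem_erase u S)
        (Finset.mem_erase.mpr ⟨hvu, hvS⟩)
  -- RHS: sum over 𝒞 equals sum over ℬ with a correction factor at v
  have hstep2 : ∑ St ∈ 𝒞, (G.induce {x : V | x ≠ u}).subtreeWeight f'
        (fun e => g (e.map Subtype.val)) St =
      ∑ S ∈ ℬ, (if v ∈ S then f u * g s(u, v) + 1 else 1) * G.subtreeWeight f g S := by
    refine Finset.sum_bij' (fun St _ => St.image Subtype.val)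
      (fun S _ => S.subtype (fun x => x ≠ u)) ?_ ?_ ?_ ?_ ?_
    · intro St hSt
      simp only [h𝒞, Finset.mem_filter, Finset.mem_univ, true_and] at hSt
      simp only [hℬ, Finset.mem_filter, Finset.mem_univ, true_and]
      refine ⟨(isSubtree_image_iff St).mpr hSt.1, ?_, ?_⟩
      · exact Finset.mem_image.mpr ⟨⟨w, hw⟩, hSt.2, rfl⟩
      · intro hu
        exact ne_of_val_mem_image hu rfl
    · intro S hS
      simp only [hℬ, Finset.mem_filter, Finset.mem_univ, true_and] at hS
      simp only [h𝒞, Finset.mem_filter, Finset.mem_univ, true_and]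
      have himg : (S.subtype (fun x => x ≠ u)).image Subtype.val = S := by
        ext x
        simp only [Finset.mem_image, Finset.mem_subtype]
        constructor
        · rintro ⟨a, ha, rfl⟩; exact ha
        · intro hx
          exact ⟨⟨x, fun h => hS.2.2 (h ▸ hx)⟩, hx, rfl⟩
      refine ⟨(isSubtree_image_iff _).mp (by rw [himg]; exact hS.1), ?_⟩
      simp only [Finset.mem_subtype]
      exact hS.2.1
    · intro St hSt
      ext a
      simp only [Finset.mem_subtype, Finset.mem_image]
      constructor
      · rintro ⟨b, hb, hba⟩
        rwa [show a = b from Subtype.ext hba.symm]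
      · intro ha; exact ⟨a, ha, rfl⟩
    · intro S hS
      simp only [hℬ, Finset.mem_filter, Finset.mem_univ, true_and] at hS
      ext x
      simp only [Finset.mem_image, Finset.mem_subtype]
      constructor
      · rintro ⟨a, ha, rfl⟩; exact ha
      · intro hx
        exact ⟨⟨x, fun h => hS.2.2 (h ▸ hx)⟩, hx, rfl⟩
    · intro St hSt
      rw [subtreeWeight_image]
      unfold SimpleGraph.subtreeWeight
      have hprodf : ∏ x ∈ St.image Subtype.val, f x = ∏ x ∈ St, f x.1 :=
        Finset.prod_image (fun a _ b _ hab => Subtype.val_injective hab)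
      by_cases hvmem : (⟨v, hvu⟩ : {x : V // x ≠ u}) ∈ St
      · have hvimg : v ∈ St.image Subtype.val := Finset.mem_image.mpr ⟨_, hvmem, rfl⟩
        rw [if_pos hvimg]
        have h1 : ∏ x ∈ St, f' x =
            (f u * g s(u, v) + 1) * ∏ x ∈ St, f x.1 := by
          rw [← Finset.mul_prod_erase St f' hvmem, ← Finset.mul_prod_erase St _ hvmem,
            hf'v]
          have : ∏ x ∈ St.erase ⟨v, hvu⟩, f' x = ∏ x ∈ St.erase ⟨v, hvu⟩, f x.1 := by
            refine Finset.prod_congr rfl (fun x hx => ?_)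
            refine hf'other x (fun hxv => ?_)
            exact (Finset.mem_erase.mp hx).1 (Subtype.ext hxv)
          rw [this]
          ring
        rw [h1, hprodf]
        ring
      · have hvimg : v ∉ St.image Subtype.val := by
          intro hc
          obtain ⟨a, ha, hav⟩ := Finset.mem_image.mp hc
          exact hvmem (by rwa [show (⟨v, hvu⟩ : {x : V // x ≠ u}) = a from
            Subtype.ext hav.symm])
        rw [if_neg hvimg]
        have h1 : ∏ x ∈ St, f' x = ∏ x ∈ St, f x.1 := by
          refine Finset.prod_congr rfl (fun x hx => ?_)
          refine hf'other x (fun hxv => hvimg ?_)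
          exact Finset.mem_image.mpr ⟨x, hx, hxv⟩
        rw [h1, hprodf]
        ring
  rw [hBeq, hstep1, hstep2]
  -- split ℬ on v ∈ S and finish by ring
  rw [← Finset.sum_filter_add_sum_filter_not ℬ (fun S => v ∈ S)
    (fun S => (if v ∈ S then f u * g s(u, v) + 1 else 1) * G.subtreeWeight f g S),
    ← Finset.sum_filter_add_sum_filter_not ℬ (fun S => v ∈ S)
    (fun S => G.subtreeWeight f g S)]
  have e1 : ∑ S ∈ ℬ.filter (fun S => v ∈ S),
      (if v ∈ S then f u * g s(u, v) + 1 else 1) * G.subtreeWeight f g S =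
      ∑ S ∈ ℬ.filter (fun S => v ∈ S),
      (f u * g s(u, v) + 1) * G.subtreeWeight f g S := by
    refine Finset.sum_congr rfl (fun S hS => ?_)
    rw [if_pos (Finset.mem_filter.mp hS).2]
  have e2 : ∑ S ∈ ℬ.filter (fun S => ¬ v ∈ S),
      (if v ∈ S then f u * g s(u, v) + 1 else 1) * G.subtreeWeight f g S =
      ∑ S ∈ ℬ.filter (fun S => ¬ v ∈ S), G.subtreeWeight f g S := by
    refine Finset.sum_congr rfl (fun S hS => ?_)
    rw [if_neg (Finset.mem_filter.mp hS).2, one_mul]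
  have e3 : ∑ S ∈ ℬ.filter (fun S => v ∈ S),
      (f u * g s(u, v) + 1) * G.subtreeWeight f g S =
      (∑ S ∈ ℬ.filter (fun S => v ∈ S), f u * g s(u, v) * G.subtreeWeight f g S) +
      ∑ S ∈ ℬ.filter (fun S => v ∈ S), G.subtreeWeight f g S := by
    rw [← Finset.sum_add_distrib]
    exact Finset.sum_congr rfl (fun S _ => by ring)
  rw [e1, e2, e3]
  ring
end

section
/- Let d > 1 and let i, k_i, k_{i+1}, …, k_d be nonnegative integers with k_i ≥ 1 and i ≤ (d+1)/2. Let T = T_d(k_i, k_{i+1}, …, k_d) be the tree obtained from the path with vertices v_1, …, v_{d+1} by attaching k_l new pendant vertices to v_l for each l = i, i+1, …, d, and let T* = T_d(k_i + k_{i+1}, k_{i+2}, …, k_d) be the tree obtained from the same path by attaching k_i + k_{i+1} new pendant vertices to v_{i+1} and k_l new pendant vertices to v_l for each l = i+2, …, d. Then χ(T) ≤ χ(T*), with equality if and only if k_{i+1} = k_{i+2} = … = k_d = 0, d is odd, and i = (d+1)/2. -/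
open SimpleGraph

/-- The caterpillar tree obtained from the path with vertices `v_1, …, v_{d+1}`
(vertex `v_l` is `l - 1 : Fin (d+1)`) by attaching `k l` new pendant vertices to
`v_l` for each `l = 1, …, d + 1`. -/
def caterpillar (d : ℕ) (k : ℕ → ℕ) :
    SimpleGraph (Fin (d + 1) ⊕ (Σ l : Fin (d + 1), Fin (k ((l : ℕ) + 1)))) where
  Adj a b :=
    match a, b with
    | Sum.inl a, Sum.inl b => (a : ℕ) + 1 = b ∨ (b : ℕ) + 1 = a
    | Sum.inl a, Sum.inr p => p.1 = a
    | Sum.inr p, Sum.inl b => p.1 = b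
    | Sum.inr _, Sum.inr _ => False
  symm := by
    constructor
    rintro (a | a) (b | b) h
    · exact Or.symm h
    · exact h
    · exact h
    · exact h
  loopless := by
    constructor
    rintro (a | a) h
    · omega
    · exact h

namespace Aux

variable {d : ℕ} {k : ℕ → ℕ}

abbrev PV (d : ℕ) (k : ℕ → ℕ) := Σ l : Fin (d + 1), Fin (k ((l : ℕ) + 1))
abbrev CV (d : ℕ) (k : ℕ → ℕ) := Fin (d + 1) ⊕ PV d k

def pos : CV d k → ℕ
  | Sum.inl a => a
  | Sum.inr p => p.1

lemma adj_pos {u v : CV d k} (h : (caterpillar d k).Adj u v) :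
    pos u ≤ pos v + 1 ∧ pos v ≤ pos u + 1 := by
  cases u with
  | inl a =>
    cases v with
    | inl b =>
      have h' : (a : ℕ) + 1 = b ∨ (b : ℕ) + 1 = a := h
      simp only [pos]; omega
    | inr p =>
      have h' : p.1 = a := h
      have := congrArg Fin.val h'
      simp only [pos]; omega
  | inr p =>
    cases v with
    | inl b =>
      have h' : p.1 = b := h
      have := congrArg Fin.val h'
      simp only [pos]; omega
    | inr q => exact (h : False).elim

lemma adj_inr {p : PV d k} {v : CV d k} (h : (caterpillar d k).Adj (Sum.inr p) v) :
    v = Sum.inl p.1 := by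
  cases v with
  | inl b => have h' : p.1 = b := h; rw [h']
  | inr q => exact (h : False).elim

lemma ivt {S : Set (CV d k)} {u v : S} (w : ((caterpillar d k).induce S).Walk u v) :
    ∀ (c : ℕ), pos u.1 ≤ c → c ≤ pos v.1 → ∃ x ∈ w.support, pos (x : CV d k) = c := by
  induction w with
  | nil =>
    intro c h1 h2
    exact ⟨_, Walk.start_mem_support _, le_antisymm h1 h2⟩
  | @cons u m v hadj w ih =>
    intro c h1 h2
    by_cases hc : pos m.1 ≤ c
    · obtain ⟨x, hx, hxc⟩ := ih c hc h2
      exact ⟨x, by simp [Walk.support_cons, hx], hxc⟩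
    · have hb := adj_pos (show (caterpillar d k).Adj u.1 m.1 from hadj)
      exact ⟨u, Walk.start_mem_support _, by omega⟩

lemma base_mem {S : Finset (CV d k)} (h : (caterpillar d k).IsSubtree S)
    {p : PV d k} (hp : Sum.inr p ∈ S) {a : Fin (d + 1)} (ha : Sum.inl a ∈ S) :
    Sum.inl p.1 ∈ S := by
  obtain ⟨w⟩ := h.2.preconnected ⟨Sum.inr p, hp⟩ ⟨Sum.inl a, ha⟩
  cases w with
  | cons hadj w' =>
    rename_i x
    have h1 : (caterpillar d k).Adj (Sum.inr p) x.1 := hadj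
    have h2 := adj_inr h1
    have := x.2
    rw [h2] at this
    exact this

lemma interval_mem {S : Finset (CV d k)} (h : (caterpillar d k).IsSubtree S)
    {a b c : Fin (d + 1)} (ha : Sum.inl a ∈ S) (hb : Sum.inl b ∈ S)
    (hac : a ≤ c) (hcb : c ≤ b) : Sum.inl c ∈ S := by
  obtain ⟨w⟩ := h.2.preconnected ⟨Sum.inl a, ha⟩ ⟨Sum.inl b, hb⟩
  obtain ⟨⟨xv, hxS⟩, _, hxc⟩ := ivt w c.1 hac hcb
  cases xv with
  | inl e =>
    have : e = c := Fin.ext hxc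
    rwa [this] at hxS
  | inr p =>
    have hc : p.1 = c := Fin.ext hxc
    have := base_mem h (Finset.mem_coe.mp hxS) ha
    rwa [hc] at this

lemma eq_singleton {S : Finset (CV d k)} (h : (caterpillar d k).IsSubtree S)
    (hno : ∀ a : Fin (d + 1), Sum.inl a ∉ S) : ∃ p : PV d k, S = {Sum.inr p} := by
  obtain ⟨v, hv⟩ := h.1
  cases v with
  | inl a => exact absurd hv (hno a)
  | inr p =>
    refine ⟨p, Finset.ext fun u => ⟨fun hu => ?_, fun hu => by
      rw [Finset.mem_singleton] at hu; rwa [hu]⟩⟩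
    rw [Finset.mem_singleton]
    obtain ⟨w⟩ := h.2.preconnected ⟨u, hu⟩ ⟨Sum.inr p, hv⟩
    cases w with
    | nil => rfl
    | cons hadj w' =>
      rename_i x
      cases u with
      | inl a => exact absurd hu (hno a)
      | inr q =>
        have h1 : (caterpillar d k).Adj (Sum.inr q) x.1 := hadj
        have h2 := adj_inr h1
        have := x.2
        rw [h2] at this
        exact absurd this (hno q.1)

end Aux

namespace Aux

variable {d : ℕ} {k : ℕ → ℕ}

def QA (S : Finset (CV d k)) : Prop := ∃ p : PV d k, S = {Sum.inr p}

def QB (S : Finset (CV d k)) : Prop :=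
  (∃ a, Sum.inl a ∈ S) ∧ (∀ p : PV d k, Sum.inr p ∈ S → Sum.inl p.1 ∈ S) ∧
    ∀ a b c : Fin (d + 1), Sum.inl a ∈ S → Sum.inl b ∈ S → a ≤ c → c ≤ b → Sum.inl c ∈ S

lemma reach_right {S : Finset (CV d k)} (hQ : QB S) :
    ∀ (n : ℕ) (a b : Fin (d + 1)) (ha : Sum.inl a ∈ S) (hb : Sum.inl b ∈ S),
      (a : ℕ) + n = b →
      ((caterpillar d k).induce (S : Set (CV d k))).Reachable ⟨Sum.inl a, ha⟩ ⟨Sum.inl b, hb⟩ := by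
  intro n
  induction n with
  | zero =>
    intro a b ha hb hab
    have : a = b := Fin.ext (by omega)
    subst this
    exact Reachable.refl _
  | succ n ih =>
    intro a b ha hb hab
    have hlt : (a : ℕ) + 1 < d + 1 := by have := b.2; omega
    set a' : Fin (d + 1) := ⟨(a : ℕ) + 1, hlt⟩ with ha'def
    have haa' : a ≤ a' := by simp [Fin.le_def, ha'def]
    have ha'b : a' ≤ b := by simp [Fin.le_def, ha'def]; omega
    have ha' : Sum.inl a' ∈ S := hQ.2.2 a b a' ha hb haa' ha'b
    have step : ((caterpillar d k).induce (S : Set (CV d k))).Adj ⟨Sum.inl a, ha⟩ ⟨Sum.inl a', ha'⟩ :=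
      show (caterpillar d k).Adj (Sum.inl a) (Sum.inl a') from Or.inl rfl
    exact step.reachable.trans (ih a' b ha' hb (by simp [ha'def]; omega))

lemma reach_path {S : Finset (CV d k)} (hQ : QB S) {a b : Fin (d + 1)}
    (ha : Sum.inl a ∈ S) (hb : Sum.inl b ∈ S) :
    ((caterpillar d k).induce (S : Set (CV d k))).Reachable ⟨Sum.inl a, ha⟩ ⟨Sum.inl b, hb⟩ := by
  rcases le_total a b with hle | hle
  · exact reach_right hQ ((b : ℕ) - a) a b ha hb (by have := (Fin.le_def.mp hle); omega)
  · exact (reach_right hQ ((a : ℕ) - b) b a hb ha (by have := (Fin.le_def.mp hle); omega)).symm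

lemma to_path {S : Finset (CV d k)} (hQ : QB S) (u : CV d k) (hu : u ∈ S) :
    ∃ (a : Fin (d + 1)) (ha : Sum.inl a ∈ S),
      ((caterpillar d k).induce (S : Set (CV d k))).Reachable ⟨u, hu⟩ ⟨Sum.inl a, ha⟩ := by
  cases u with
  | inl a => exact ⟨a, hu, Reachable.refl _⟩
  | inr p =>
    have hbase := hQ.2.1 p hu
    have step : ((caterpillar d k).induce (S : Set (CV d k))).Adj ⟨Sum.inr p, hu⟩
        ⟨Sum.inl p.1, hbase⟩ := show (caterpillar d k).Adj (Sum.inr p) (Sum.inl p.1) from rfl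
    exact ⟨p.1, hbase, step.reachable⟩

lemma subtree_iff (S : Finset (CV d k)) :
    (caterpillar d k).IsSubtree S ↔ QA S ∨ QB S := by
  constructor
  · intro h
    by_cases hpath : ∃ a : Fin (d + 1), Sum.inl a ∈ S
    · obtain ⟨a0, ha0⟩ := hpath
      exact Or.inr ⟨⟨a0, ha0⟩, fun p hp => base_mem h hp ha0,
        fun a b c ha hb hac hcb => interval_mem h ha hb hac hcb⟩
    · push_neg at hpath
      exact Or.inl (eq_singleton h hpath)
  · rintro (⟨p, rfl⟩ | hQ)
    · refine ⟨⟨Sum.inr p, Finset.mem_singleton_self _⟩, ?_⟩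
      rw [connected_iff]
      refine ⟨fun u v => ?_, ⟨⟨Sum.inr p, Finset.mem_singleton_self _⟩⟩⟩
      have hu : u = v := by
        apply Subtype.ext
        have hu' := u.2
        have hv' := v.2
        simp only [Finset.coe_singleton, Set.mem_singleton_iff] at hu' hv'
        rw [hu', hv']
      rw [hu]
    · obtain ⟨a0, ha0⟩ := hQ.1
      refine ⟨⟨Sum.inl a0, ha0⟩, ?_⟩
      rw [connected_iff]
      refine ⟨fun u v => ?_, ⟨⟨Sum.inl a0, ha0⟩⟩⟩
      obtain ⟨au, hau, hru⟩ := to_path hQ u.1 u.2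
      obtain ⟨av, hav, hrv⟩ := to_path hQ v.1 v.2
      exact (hru.trans (reach_path hQ hau hav)).trans hrv.symm

end Aux

namespace Aux

variable {d : ℕ} {k : ℕ → ℕ}

open Finset

noncomputable instance : ∀ S : Finset (CV d k), Decidable (QA S) := fun _ => Classical.dec _

lemma QA_disjoint_QB : Disjoint (QA (d := d) (k := k)) QB := by
  intro r h1 h2 S hS
  obtain ⟨p, hp⟩ := h1 S hS
  obtain ⟨a, ha⟩ := (h2 S hS).1
  rw [hp] at ha
  simp at ha

/-- the pendant-singleton subtrees are counted by the pendants -/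
lemma cardQA : Nat.card {S : Finset (CV d k) // QA S} = ∑ l ∈ range (d + 1), k (l + 1) := by
  have e : PV d k ≃ {S : Finset (CV d k) // QA S} := by
    refine Equiv.ofBijective (fun p => ⟨{Sum.inr p}, p, rfl⟩) ⟨fun p q hpq => ?_, ?_⟩
    · have := congrArg Subtype.val hpq
      simpa using this
    · rintro ⟨S, p, rfl⟩
      exact ⟨p, rfl⟩
  rw [← Nat.card_congr e, Nat.card_eq_fintype_card, Fintype.card_sigma]
  simp [Fin.sum_univ_eq_sum_range (fun l => k (l + 1))]

def pathF (S : Finset (CV d k)) : Finset (Fin (d + 1)) := univ.filter (fun a => Sum.inl a ∈ S)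
def pendF (S : Finset (CV d k)) : Finset (PV d k) := univ.filter (fun p => Sum.inr p ∈ S)

/-- data type for non-singleton subtrees -/
abbrev EB (d : ℕ) (k : ℕ → ℕ) :=
  Σ a : Fin (d + 1), Σ b : {b : Fin (d + 1) // a ≤ b},
    {P : Finset (PV d k) // ∀ p ∈ P, a ≤ p.1 ∧ p.1 ≤ b.1}

def buildS (a b : Fin (d + 1)) (P : Finset (PV d k)) : Finset (CV d k) :=
  (Icc a b).image Sum.inl ∪ P.image Sum.inr

lemma mem_buildS_inl {a b c : Fin (d + 1)} {P : Finset (PV d k)} :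
    Sum.inl c ∈ buildS a b P ↔ c ∈ Icc a b := by
  simp [buildS]

lemma mem_buildS_inr {a b : Fin (d + 1)} {P : Finset (PV d k)} {p : PV d k} :
    Sum.inr p ∈ buildS a b P ↔ p ∈ P := by
  simp [buildS]

lemma QB_buildS {a b : Fin (d + 1)} {P : Finset (PV d k)} (hab : a ≤ b)
    (hP : ∀ p ∈ P, a ≤ p.1 ∧ p.1 ≤ b) : QB (buildS a b P) := by
  refine ⟨⟨a, mem_buildS_inl.mpr (by simp [hab])⟩, fun p hp => ?_, fun x y c hx hy hxc hcy => ?_⟩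
  · rw [mem_buildS_inr] at hp
    exact mem_buildS_inl.mpr (mem_Icc.mpr (hP p hp))
  · rw [mem_buildS_inl] at hx hy ⊢
    rw [mem_Icc] at hx hy ⊢
    exact ⟨le_trans hx.1 hxc, le_trans hcy hy.2⟩

noncomputable def gB : EB d k → {S : Finset (CV d k) // QB S} :=
  fun x => ⟨buildS x.1 x.2.1.1 x.2.2.1, QB_buildS x.2.1.2 (fun p hp => x.2.2.2 p hp)⟩

lemma gB_bijective : Function.Bijective (gB (d := d) (k := k)) := by
  constructor
  · rintro ⟨a, ⟨b, hab⟩, ⟨P, hP⟩⟩ ⟨a', ⟨b', hab'⟩, ⟨P', hP'⟩⟩ h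
    have hS := congrArg Subtype.val h
    simp only [gB] at hS
    have hIcc : Icc a b = Icc a' b' := by
      ext c
      rw [← mem_buildS_inl (P := P), hS, mem_buildS_inl]
    have hPP : P = P' := by
      ext p
      rw [← mem_buildS_inr (a := a) (b := b), hS, mem_buildS_inr]
    have haa : a = a' := by
      have h1 : a ∈ Icc a' b' := hIcc ▸ mem_Icc.mpr ⟨le_refl a, hab⟩
      have h2 : a' ∈ Icc a b := hIcc.symm ▸ mem_Icc.mpr ⟨le_refl a', hab'⟩
      exact le_antisymm (mem_Icc.mp h2).1 (mem_Icc.mp h1).1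
    have hbb : b = b' := by
      have h1 : b ∈ Icc a' b' := hIcc ▸ mem_Icc.mpr ⟨hab, le_refl b⟩
      have h2 : b' ∈ Icc a b := hIcc.symm ▸ mem_Icc.mpr ⟨hab', le_refl b'⟩
      exact le_antisymm (mem_Icc.mp h1).2 (mem_Icc.mp h2).2
    subst haa; subst hbb; subst hPP
    rfl
  · rintro ⟨S, hQ⟩
    have hne : (pathF S).Nonempty := by
      obtain ⟨a, ha⟩ := hQ.1
      exact ⟨a, by simp [pathF, ha]⟩
    set a := (pathF S).min' hne with hadef
    set b := (pathF S).max' hne with hbdef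
    have hmem : ∀ c : Fin (d + 1), c ∈ pathF S ↔ Sum.inl c ∈ S := by
      intro c; simp [pathF]
    have hab : a ≤ b := Finset.min'_le _ _ (max'_mem _ _)
    have haS : Sum.inl a ∈ S := (hmem a).mp (min'_mem _ _)
    have hbS : Sum.inl b ∈ S := (hmem b).mp (max'_mem _ _)
    refine ⟨⟨a, ⟨b, hab⟩, ⟨pendF S, fun p hp => ?_⟩⟩, ?_⟩
    · have hpS : Sum.inr p ∈ S := by simpa [pendF] using hp
      have := hQ.2.1 p hpS
      have hmemp : p.1 ∈ pathF S := (hmem p.1).mpr this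
      exact ⟨min'_le _ _ hmemp, le_max' _ _ hmemp⟩
    · apply Subtype.ext
      simp only [gB]
      ext u
      cases u with
      | inl c =>
        rw [mem_buildS_inl, mem_Icc]
        constructor
        · intro hc
          exact hQ.2.2 a b c haS hbS hc.1 hc.2
        · intro hc
          have := (hmem c).mpr hc
          exact ⟨min'_le _ _ this, le_max' _ _ this⟩
      | inr p =>
        rw [mem_buildS_inr]
        simp [pendF]

lemma card_pend_subtype (a b : Fin (d + 1)) :
    Nat.card {P : Finset (PV d k) // ∀ p ∈ P, a ≤ p.1 ∧ p.1 ≤ b} =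
      2 ^ (∑ l ∈ Icc (a : ℕ) (b : ℕ), k (l + 1)) := by
  set t : Finset (PV d k) := (Icc a b).sigma (fun l => univ) with htdef
  have hmem : ∀ P : Finset (PV d k), (∀ p ∈ P, a ≤ p.1 ∧ p.1 ≤ b) ↔ P ∈ t.powerset := by
    intro P
    rw [mem_powerset]
    constructor
    · intro h p hp
      rw [htdef, Finset.mem_sigma]
      exact ⟨mem_Icc.mpr (h p hp), mem_univ _⟩
    · intro h p hp
      have := h hp
      rw [htdef, Finset.mem_sigma, mem_Icc] at this
      exact this.1
  rw [Nat.card_congr (Equiv.subtypeEquivRight hmem), Nat.card_eq_fintype_card,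
    Fintype.card_coe, card_powerset]
  congr 1
  rw [htdef, Finset.card_sigma]
  simp only [card_univ, Fintype.card_fin]
  rw [← Fin.map_valEmbedding_Icc, Finset.sum_map]
  rfl

lemma cardQB : Nat.card {S : Finset (CV d k) // QB S} =
    ∑ a ∈ range (d + 1), ∑ b ∈ Icc a d, 2 ^ (∑ l ∈ Icc a b, k (l + 1)) := by
  rw [← Nat.card_congr (Equiv.ofBijective gB gB_bijective)]
  rw [Nat.card_eq_fintype_card, Fintype.card_sigma]
  rw [← Fin.sum_univ_eq_sum_range]
  apply Finset.sum_congr rfl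
  intro a _
  rw [Fintype.card_sigma]
  have hsub : ∑ b ∈ Icc a (Fin.last d), (
      Fintype.card {P : Finset (PV d k) // ∀ p ∈ P, a ≤ p.1 ∧ p.1 ≤ b}) =
      ∑ b : {b : Fin (d + 1) // a ≤ b},
        Fintype.card {P : Finset (PV d k) // ∀ p ∈ P, a ≤ p.1 ∧ p.1 ≤ b.1} := by
    apply Finset.sum_subtype
    intro b
    simp [Fin.le_last]
  rw [← hsub]
  have : ∀ b ∈ Icc a (Fin.last d),
      (Fintype.card {P : Finset (PV d k) // ∀ p ∈ P, a ≤ p.1 ∧ p.1 ≤ b}) =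
        2 ^ (∑ l ∈ Icc (a : ℕ) (b : ℕ), k (l + 1)) := by
    intro b _
    rw [← Nat.card_eq_fintype_card]
    exact card_pend_subtype a b
  rw [Finset.sum_congr rfl this]
  have hIcc : Icc (a : ℕ) d = (Icc a (Fin.last d)).map Fin.valEmbedding := by
    rw [Fin.map_valEmbedding_Icc, Fin.val_last]
  rw [hIcc, Finset.sum_map]
  rfl

lemma countA : (caterpillar d k).subtreeCount =
    (∑ l ∈ range (d + 1), k (l + 1)) +
      ∑ a ∈ range (d + 1), ∑ b ∈ Icc a d, 2 ^ (∑ l ∈ Icc a b, k (l + 1)) := by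
  rw [SimpleGraph.subtreeCount,
    Nat.card_congr (Equiv.subtypeEquivRight (fun S => subtree_iff S)),
    Nat.card_congr (subtypeOrEquiv _ _ QA_disjoint_QB),
    Nat.card_sum, cardQA, cardQB]

end Aux

namespace Aux

open Finset

/-- the counting formula -/
def FF (d : ℕ) (k : ℕ → ℕ) : ℕ :=
  (∑ l ∈ range (d + 1), k (l + 1)) +
    ∑ a ∈ range (d + 1), ∑ b ∈ Icc a d, 2 ^ (∑ l ∈ Icc a b, k (l + 1))

lemma countA' {d : ℕ} {k : ℕ → ℕ} : (caterpillar d k).subtreeCount = FF d k := countA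

lemma sum_pair_congr {s : Finset ℕ} {j : ℕ} (hj : j ∈ s) (hj1 : j + 1 ∈ s)
    {f g : ℕ → ℕ} (hfg : ∀ l ∈ s, l ≠ j → l ≠ j + 1 → f l = g l)
    (hsum : f j + f (j + 1) = g j + g (j + 1)) : ∑ l ∈ s, f l = ∑ l ∈ s, g l := by
  have hj' : j ∈ s.erase (j + 1) := mem_erase.mpr ⟨by omega, hj⟩
  rw [← Finset.add_sum_erase s f hj1, ← Finset.add_sum_erase _ f hj',
      ← Finset.add_sum_erase s g hj1, ← Finset.add_sum_erase _ g hj']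
  have heq : ∑ l ∈ (s.erase (j + 1)).erase j, f l = ∑ l ∈ (s.erase (j + 1)).erase j, g l :=
    Finset.sum_congr rfl fun l hl => by
      rw [mem_erase, mem_erase] at hl
      exact hfg l hl.2.2 hl.1 hl.2.1
  omega

lemma keyB (d i : ℕ) (k k' : ℕ → ℕ) (hd : 1 < d) (hi : 1 ≤ i) (hki : 1 ≤ k i)
    (hhalf : 2 * i ≤ d + 1) (hlow : ∀ l, l < i → k l = 0) (hhigh : ∀ l, d < l → k l = 0)
    (hk'i : k' i = 0) (hk'i1 : k' (i + 1) = k i + k (i + 1))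
    (hk'o : ∀ l, l ≠ i → l ≠ i + 1 → k' l = k l) :
    ∃ w0 x1 : ℕ, 1 ≤ x1 ∧ FF d k + x1 * w0 = FF d k' ∧
      (w0 = 0 ↔ (∀ l, i < l → k l = 0) ∧ Odd d ∧ 2 * i = d + 1) := by
  obtain ⟨j, rfl⟩ : ∃ j, i = j + 1 := ⟨i - 1, by omega⟩
  have hjd : j + 1 ≤ d := by omega
  -- pendant sums are equal
  have hP : ∑ l ∈ range (d + 1), k' (l + 1) = ∑ l ∈ range (d + 1), k (l + 1) := by
    apply sum_pair_congr (j := j) (by simp; omega) (by simp; omega)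
    · intro l _ h1 h2
      exact hk'o _ (by omega) (by omega)
    · rw [hk'i, hk'i1]
      omega
  -- abbreviations
  have hx2 : 2 ≤ 2 ^ k (j + 1) := by
    calc (2:ℕ) = 2 ^ 1 := rfl
    _ ≤ 2 ^ k (j + 1) := Nat.pow_le_pow_right (by norm_num) hki
  -- the per-row claim
  have claim : ∀ a ∈ range (d + 1),
      (∑ b ∈ Icc a d, 2 ^ (∑ l ∈ Icc a b, k' (l + 1))) +
        ((if a ≤ j then 2 ^ k (j + 1) else 0) +
          (if a = j + 1 then ∑ b ∈ Icc (j+1) d, 2 ^ (∑ l ∈ Icc (j+1) b, k (l + 1)) else 0)) =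
      (∑ b ∈ Icc a d, 2 ^ (∑ l ∈ Icc a b, k (l + 1))) +
        ((if a ≤ j then 1 else 0) +
          (if a = j + 1 then
            2 ^ k (j + 1) * ∑ b ∈ Icc (j+1) d, 2 ^ (∑ l ∈ Icc (j+1) b, k (l + 1)) else 0)) := by
    intro a ha
    rw [mem_range] at ha
    rcases lt_trichotomy a (j + 1) with hcase | hcase | hcase
    · -- a ≤ j
      have haj : a ≤ j := by omega
      have hc2 : ¬ (a = j + 1) := by omega
      rw [if_pos haj, if_pos haj, if_neg hc2, if_neg hc2]
      have hjmem : j ∈ Icc a d := mem_Icc.mpr ⟨haj, by omega⟩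
      rw [← Finset.add_sum_erase _ (fun b => 2 ^ (∑ l ∈ Icc a b, k' (l + 1))) hjmem,
          ← Finset.add_sum_erase _ (fun b => 2 ^ (∑ l ∈ Icc a b, k (l + 1))) hjmem]
      have h1 : (∑ l ∈ Icc a j, k' (l + 1)) = 0 := Finset.sum_eq_zero fun l hl => by
        rw [mem_Icc] at hl
        rcases eq_or_ne (l + 1) (j + 1) with h | h
        · rw [h, hk'i]
        · rw [hk'o _ h (by omega)]
          exact hlow _ (by omega)
      have h2 : (∑ l ∈ Icc a j, k (l + 1)) = k (j + 1) := by
        have hjj : j ∈ Icc a j := mem_Icc.mpr ⟨haj, le_refl _⟩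
        rw [← Finset.add_sum_erase _ (fun l => k (l + 1)) hjj]
        have hz : ∑ l ∈ (Icc a j).erase j, k (l + 1) = 0 := Finset.sum_eq_zero fun l hl => by
          rw [mem_erase, mem_Icc] at hl
          exact hlow _ (by omega)
        omega
      have h3 : ∑ b ∈ (Icc a d).erase j, 2 ^ (∑ l ∈ Icc a b, k' (l + 1)) =
          ∑ b ∈ (Icc a d).erase j, 2 ^ (∑ l ∈ Icc a b, k (l + 1)) := by
        apply Finset.sum_congr rfl
        intro b hb
        rw [mem_erase, mem_Icc] at hb
        congr 1
        rcases lt_or_ge b j with hbj | hbj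
        · exact Finset.sum_congr rfl fun l hl => by
            rw [mem_Icc] at hl
            exact hk'o _ (by omega) (by omega)
        · apply sum_pair_congr (j := j) (mem_Icc.mpr ⟨haj, by omega⟩)
            (mem_Icc.mpr ⟨by omega, by omega⟩)
          · intro l _ h1' h2'
            exact hk'o _ (by omega) (by omega)
          · rw [hk'i, hk'i1]
            omega
      rw [h1, h2, h3]
      simp only [pow_zero]
      omega
    · -- a = j + 1
      subst hcase
      have hc1 : ¬ (j + 1 ≤ j) := by omega
      rw [if_neg hc1, if_neg hc1, if_pos rfl, if_pos rfl]
      have hmain : ∑ b ∈ Icc (j + 1) d, 2 ^ (∑ l ∈ Icc (j + 1) b, k' (l + 1)) =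
          2 ^ k (j + 1) * ∑ b ∈ Icc (j + 1) d, 2 ^ (∑ l ∈ Icc (j + 1) b, k (l + 1)) := by
        rw [Finset.mul_sum]
        apply Finset.sum_congr rfl
        intro b hb
        rw [mem_Icc] at hb
        have hm : j + 1 ∈ Icc (j + 1) b := mem_Icc.mpr ⟨le_refl _, hb.1⟩
        have e1 : ∑ l ∈ Icc (j + 1) b, k' (l + 1) =
            k (j + 1) + ∑ l ∈ Icc (j + 1) b, k (l + 1) := by
          rw [← Finset.add_sum_erase _ (fun l => k' (l + 1)) hm,
              ← Finset.add_sum_erase _ (fun l => k (l + 1)) hm, hk'i1]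
          have hz : ∑ l ∈ (Icc (j + 1) b).erase (j + 1), k' (l + 1) =
              ∑ l ∈ (Icc (j + 1) b).erase (j + 1), k (l + 1) :=
            Finset.sum_congr rfl fun l hl => by
              rw [mem_erase, mem_Icc] at hl
              exact hk'o _ (by omega) (by omega)
          omega
        rw [e1, pow_add]
      omega
    · -- a > j + 1
      have hc1 : ¬ (a ≤ j) := by omega
      have hc2 : ¬ (a = j + 1) := by omega
      rw [if_neg hc1, if_neg hc1, if_neg hc2, if_neg hc2]
      have : ∑ b ∈ Icc a d, 2 ^ (∑ l ∈ Icc a b, k' (l + 1)) =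
          ∑ b ∈ Icc a d, 2 ^ (∑ l ∈ Icc a b, k (l + 1)) := by
        apply Finset.sum_congr rfl
        intro b hb
        congr 1
        apply Finset.sum_congr rfl
        intro l hl
        rw [mem_Icc] at hl
        exact hk'o _ (by omega) (by omega)
      omega
  -- sum the claim
  have hsum2 := Finset.sum_congr rfl claim
  rw [Finset.sum_add_distrib, Finset.sum_add_distrib, Finset.sum_add_distrib,
      Finset.sum_add_distrib] at hsum2
  have hfilter : (range (d + 1)).filter (fun a => a ≤ j) = range (j + 1) := by
    ext a
    simp only [mem_filter, mem_range]
    omega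
  have hite1 : ∑ a ∈ range (d + 1), (if a ≤ j then 2 ^ k (j + 1) else 0) =
      (j + 1) * 2 ^ k (j + 1) := by
    rw [← Finset.sum_filter, hfilter, Finset.sum_const, card_range, smul_eq_mul]
  have hite1' : ∑ a ∈ range (d + 1), (if a ≤ j then 1 else 0) = j + 1 := by
    rw [← Finset.sum_filter, hfilter, Finset.sum_const, card_range, smul_eq_mul, mul_one]
  have hmemj1 : j + 1 ∈ range (d + 1) := by simp; omega
  have hite2 : ∀ c : ℕ, ∑ a ∈ range (d + 1), (if a = j + 1 then c else 0) = c := by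
    intro c
    rw [← Finset.sum_filter, Finset.filter_eq' (range (d + 1)) (j + 1), if_pos hmemj1,
      Finset.sum_singleton]
  rw [hite1, hite1', hite2, hite2] at hsum2
  -- lower bound for W
  set W := ∑ b ∈ Icc (j + 1) d, 2 ^ (∑ l ∈ Icc (j + 1) b, k (l + 1)) with hWdef
  have hterm1 : ∀ b ∈ Icc (j + 1) d, 1 ≤ 2 ^ (∑ l ∈ Icc (j + 1) b, k (l + 1)) :=
    fun b _ => Nat.one_le_two_pow
  have hWge : d - j ≤ W := by
    have := Finset.card_nsmul_le_sum (Icc (j + 1) d)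
      (fun b => 2 ^ (∑ l ∈ Icc (j + 1) b, k (l + 1))) 1 hterm1
    rw [smul_eq_mul, mul_one, Nat.card_Icc] at this
    omega
  obtain ⟨w0, hw0⟩ : ∃ w0, W = (j + 1) + w0 := ⟨W - (j + 1), by omega⟩
  obtain ⟨x1, hx1⟩ : ∃ x1, 2 ^ k (j + 1) = 1 + x1 := ⟨2 ^ k (j + 1) - 1, by omega⟩
  refine ⟨w0, x1, by omega, ?_, ?_⟩
  · -- the sum identity
    show FF d k + x1 * w0 = FF d k'
    rw [FF, FF, hP]
    rw [hx1, hw0] at hsum2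
    have e1 : (j + 1) * (1 + x1) = (j + 1) + x1 * (j + 1) := by ring
    have e2 : (1 + x1) * ((j + 1) + w0) = (j + 1) + w0 + x1 * (j + 1) + x1 * w0 := by ring
    rw [e1, e2] at hsum2
    set p := x1 * (j + 1) with hp
    set u := x1 * w0 with hu
    omega
  · -- equality characterization
    constructor
    · intro hw0z
      have hWeq : W = j + 1 := by omega
      have hdj : d = 2 * j + 1 := by
        -- W ≥ d - j and W = j+1, with d ≥ 2j+1
        omega
      have hzero : ∑ l ∈ Icc (j + 1) d, k (l + 1) = 0 := by
        by_contra hne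
        have h2le : 2 ≤ 2 ^ (∑ l ∈ Icc (j + 1) d, k (l + 1)) := by
          calc (2:ℕ) = 2 ^ 1 := rfl
          _ ≤ _ := Nat.pow_le_pow_right (by norm_num) (by omega)
        have hdm : d ∈ Icc (j + 1) d := mem_Icc.mpr ⟨by omega, le_refl _⟩
        have hWsplit : W = 2 ^ (∑ l ∈ Icc (j + 1) d, k (l + 1)) +
            ∑ b ∈ (Icc (j + 1) d).erase d, 2 ^ (∑ l ∈ Icc (j + 1) b, k (l + 1)) := by
          rw [hWdef, ← Finset.add_sum_erase _ (fun b => 2 ^ (∑ l ∈ Icc (j + 1) b, k (l + 1))) hdm]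
        have hrest := Finset.card_nsmul_le_sum ((Icc (j + 1) d).erase d)
          (fun b => 2 ^ (∑ l ∈ Icc (j + 1) b, k (l + 1))) 1
          (fun b hb => hterm1 b (Finset.mem_of_mem_erase hb))
        rw [smul_eq_mul, mul_one, Finset.card_erase_of_mem hdm, Nat.card_Icc] at hrest
        omega
      refine ⟨fun l hl => ?_, ⟨j, by omega⟩, by omega⟩
      rcases le_or_gt l (d + 1) with hld | hld
      · have hm : l - 1 ∈ Icc (j + 1) d := mem_Icc.mpr ⟨by omega, by omega⟩
        have := (Finset.sum_eq_zero_iff.mp hzero) (l - 1) hm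
        have hll : l - 1 + 1 = l := by omega
        rwa [hll] at this
      · exact hhigh l (by omega)
    · rintro ⟨hzero, hodd, hd2⟩
      have hWeq : W = j + 1 := by
        have : ∀ b ∈ Icc (j + 1) d, 2 ^ (∑ l ∈ Icc (j + 1) b, k (l + 1)) = 1 := by
          intro b _
          have : ∑ l ∈ Icc (j + 1) b, k (l + 1) = 0 :=
            Finset.sum_eq_zero fun l hl => hzero _ (by rw [mem_Icc] at hl; omega)
          rw [this, pow_zero]
        rw [hWdef, Finset.sum_congr rfl this, Finset.sum_const, smul_eq_mul, mul_one,
          Nat.card_Icc]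
        omega
      omega

end Aux

/-- The third tree transformation. For `d > 1`, `1 ≤ i ≤ (d+1)/2`, `k i ≥ 1`, and
pendant counts `k` supported on `{i, …, d}`, let `T = T_d(k_i, …, k_d)` and
`T* = T_d(k_i + k_{i+1}, k_{i+2}, …, k_d)`. Then `χ(T) ≤ χ(T*)`, with equality iff
`k_{i+1} = ⋯ = k_d = 0`, `d` is odd, and `i = (d+1)/2`. -/
theorem third_transformation_subtree_count (d i : ℕ) (k : ℕ → ℕ)
    (hd : 1 < d) (hi : 1 ≤ i) (hki : 1 ≤ k i) (hhalf : 2 * i ≤ d + 1)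
    (hlow : ∀ l, l < i → k l = 0) (hhigh : ∀ l, d < l → k l = 0) :
    (caterpillar d k).subtreeCount ≤
        (caterpillar d
          (fun l => if l = i then 0 else if l = i + 1 then k i + k (i + 1) else k l)).subtreeCount ∧
      ((caterpillar d k).subtreeCount =
          (caterpillar d
            (fun l => if l = i then 0 else if l = i + 1 then k i + k (i + 1) else k l)).subtreeCount ↔
        (∀ l, i < l → k l = 0) ∧ Odd d ∧ 2 * i = d + 1) := by
  obtain ⟨w0, x1, hx1, hkey, hiff⟩ := Aux.keyB d i k
    (fun l => if l = i then 0 else if l = i + 1 then k i + k (i + 1) else k l)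
    hd hi hki hhalf hlow hhigh
    (by simp)
    (by simp only []; rw [if_neg (show ¬ (i + 1 = i) by omega)]; simp)
    (fun l h1 h2 => by show (if l = i then 0 else if l = i + 1 then k i + k (i + 1) else k l) = k l; rw [if_neg h1, if_neg h2])
  rw [Aux.countA', Aux.countA', ← hkey]
  constructor
  · exact Nat.le_add_right _ _
  · constructor
    · intro h
      apply hiff.mp
      have h0 : Aux.FF d k + x1 * w0 = Aux.FF d k + 0 := by omega
      have := Nat.add_left_cancel h0
      rcases Nat.mul_eq_zero.mp this with h' | h'
      · omega
      · exact h'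
    · intro h
      have : w0 = 0 := hiff.mpr h
      rw [this, Nat.mul_zero, Nat.add_zero]
end

section
/- Let T₀ be a tree with at least two vertices, let u be a vertex of T₀, and for positive integers s, t let T₀(s, t) be the tree obtained from T₀ by attaching two disjoint pendant paths at u, one with s new vertices and one with t new vertices (i.e., identifying u with one endpoint of a path with s+1 vertices and with one endpoint of a path with t+1 vertices). Then for all integers s ≥ 2 and t ≥ 2, χ(T₀(s, t)) > χ(T₀(s + t − 1, 1)). -/
open SimpleGraph

/-- The tree obtained from `G` by attaching a pendant path with `r` new vertices at
the vertex `u` (i.e. identifying `u` with one endpoint of a path with `r + 1`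
vertices). -/
def addPath {V : Type*} (G : SimpleGraph V) (u : V) (r : ℕ) :
    SimpleGraph (V ⊕ Fin r) where
  Adj a b :=
    match a, b with
    | Sum.inl a, Sum.inl b => G.Adj a b
    | Sum.inl a, Sum.inr j => a = u ∧ (j : ℕ) = 0
    | Sum.inr j, Sum.inl b => b = u ∧ (j : ℕ) = 0
    | Sum.inr i, Sum.inr j => (i : ℕ) + 1 = j ∨ (j : ℕ) + 1 = i
  symm := by
    refine ⟨?_⟩
    rintro (a | a) (b | b) h
    · exact h.symm
    · exact h
    · exact h
    · exact Or.symm h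
  loopless := by
    refine ⟨?_⟩
    rintro (a | a) h
    · exact G.irrefl h
    · omega


section Walks
variable {V : Type*} {r : ℕ} (G : SimpleGraph V) (u : V) (S : Finset (V ⊕ Fin r))

/-- Reachability in the `V`-part of `S`. -/
def RL (a b : V) : Prop := ∀ (ha : Sum.inl a ∈ S) (hb : Sum.inl b ∈ S),
  (G.induce {x : V | Sum.inl x ∈ S}).Reachable ⟨a, ha⟩ ⟨b, hb⟩

/-- All path vertices up to `j` are in `S`. -/
def Pref (j : Fin r) : Prop := ∀ k : Fin r, (k : ℕ) ≤ (j : ℕ) → Sum.inr k ∈ S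

def Qprop : (V ⊕ Fin r) → (V ⊕ Fin r) → Prop
  | Sum.inl a, Sum.inl b => RL G S a b
  | Sum.inl a, Sum.inr j => Sum.inl u ∈ S ∧ RL G S a u ∧ Pref S j
  | Sum.inr i, Sum.inl b => Sum.inl u ∈ S ∧ RL G S u b ∧ Pref S i
  | Sum.inr i, Sum.inr j => ∀ k : Fin r,
      ((i : ℕ) ≤ k ∧ (k : ℕ) ≤ j ∨ (j : ℕ) ≤ k ∧ (k : ℕ) ≤ i) → Sum.inr k ∈ S

lemma walk_Q : ∀ {x y : ↑(S : Set (V ⊕ Fin r))}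
    (_ : ((addPath G u r).induce (S : Set (V ⊕ Fin r))).Walk x y), Qprop G u S x.1 y.1 := by
  intro x y w
  induction w with
  | nil =>
    rename_i v
    obtain ⟨xv, hx⟩ := v
    match xv with
    | Sum.inl a =>
      intro ha hb
      exact Reachable.refl _
    | Sum.inr i =>
      intro k hk
      have : k = i := Fin.ext (by omega)
      subst this; exact hx
  | @cons x z y h p ih =>
    obtain ⟨xv, hx⟩ := x
    obtain ⟨zv, hz⟩ := z
    obtain ⟨yv, hy⟩ := y
    have h' : (addPath G u r).Adj xv zv := h
    match xv, zv with
    | Sum.inl a, Sum.inl c =>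
      have hac : G.Adj a c := h'
      match yv with
      | Sum.inl b =>
        intro ha hb
        exact ((show (G.induce {x : V | Sum.inl x ∈ S}).Adj ⟨a, ha⟩ ⟨c, hz⟩ from hac).reachable).trans
          (ih hz hb)
      | Sum.inr j =>
        refine ⟨ih.1, fun ha hu => ?_, ih.2.2⟩
        exact ((show (G.induce {x : V | Sum.inl x ∈ S}).Adj ⟨a, ha⟩ ⟨c, hz⟩ from hac).reachable).trans
          (ih.2.1 hz hu)
    | Sum.inl a, Sum.inr i =>
      obtain ⟨rfl, hi0⟩ : a = u ∧ (i : ℕ) = 0 := h'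
      match yv with
      | Sum.inl b => exact fun ha hb => ih.2.1 ha hb
      | Sum.inr j =>
        refine ⟨hx, fun ha hb => Reachable.refl _, fun k hk => ih k (Or.inl ⟨by omega, hk⟩)⟩
    | Sum.inr i, Sum.inl c =>
      obtain ⟨rfl, hi0⟩ : c = u ∧ (i : ℕ) = 0 := h'
      match yv with
      | Sum.inl b =>
        refine ⟨hz, fun ha hb => ih ha hb, fun k hk => ?_⟩
        have : k = i := Fin.ext (by omega)
        subst this; exact hx
      | Sum.inr j =>
        intro k hk
        exact ih.2.2 k (by omega)
    | Sum.inr i, Sum.inr i' =>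
      have hii : (i : ℕ) + 1 = i' ∨ (i' : ℕ) + 1 = i := h'
      match yv with
      | Sum.inl b =>
        refine ⟨ih.1, ih.2.1, fun k hk => ?_⟩
        by_cases hk' : (k : ℕ) ≤ (i' : ℕ)
        · exact ih.2.2 k hk'
        · have : k = i := Fin.ext (by omega)
          subst this; exact hx
      | Sum.inr j =>
        intro k hk
        by_cases h2 : ((i' : ℕ) ≤ k ∧ (k : ℕ) ≤ j ∨ (j : ℕ) ≤ k ∧ (k : ℕ) ≤ i')
        · exact ih k h2
        · have : k = i := Fin.ext (by omega)
          subst this; exact hx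

end Walks

section Shapes
variable {V : Type*} [DecidableEq V] {r : ℕ} (G : SimpleGraph V) (u : V)

lemma reachable_inl {S₀ : Finset V} (h : G.IsSubtree S₀) {T : Finset (V ⊕ Fin r)}
    (hsub : ∀ x ∈ S₀, Sum.inl x ∈ T) {a b : V} (ha : a ∈ S₀) (hb : b ∈ S₀)
    (ha' : Sum.inl a ∈ (T : Set (V ⊕ Fin r))) (hb' : Sum.inl b ∈ (T : Set (V ⊕ Fin r))) :
    ((addPath G u r).induce (T : Set (V ⊕ Fin r))).Reachable ⟨Sum.inl a, ha'⟩ ⟨Sum.inl b, hb'⟩ := by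
  let φ : G.induce (S₀ : Set V) →g (addPath G u r).induce (T : Set (V ⊕ Fin r)) :=
    ⟨fun p => ⟨Sum.inl p.1, Finset.mem_coe.mpr (hsub p.1 (Finset.mem_coe.mp p.2))⟩,
     fun {p q} hpq => hpq⟩
  exact (h.2.preconnected ⟨a, Finset.mem_coe.mpr ha⟩ ⟨b, Finset.mem_coe.mpr hb⟩).map φ

lemma reachable_inr_down {T : Finset (V ⊕ Fin r)} :
    ∀ (n : ℕ) {i k : Fin r}, (k : ℕ) = (i : ℕ) + n →
    (∀ m : Fin r, (i : ℕ) ≤ m → (m : ℕ) ≤ k → Sum.inr m ∈ T) →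
    ∀ (hk : Sum.inr k ∈ (T : Set (V ⊕ Fin r))) (hi : Sum.inr i ∈ (T : Set (V ⊕ Fin r))),
    ((addPath G u r).induce (T : Set (V ⊕ Fin r))).Reachable ⟨Sum.inr k, hk⟩ ⟨Sum.inr i, hi⟩ := by
  intro n
  induction n with
  | zero =>
    intro i k hk _ hk' hi'
    have : k = i := Fin.ext (by omega)
    subst this
    exact Reachable.refl _
  | succ m ih =>
    intro i k hk hall hk' hi'
    have hm : (i : ℕ) + m < r := by have := k.2; omega
    have hk'T : Sum.inr (⟨(i : ℕ) + m, hm⟩ : Fin r) ∈ T := hall _ (by simp) (by simp; omega)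
    have hadj : ((addPath G u r).induce (T : Set (V ⊕ Fin r))).Adj
        ⟨Sum.inr k, hk'⟩ ⟨Sum.inr ⟨(i : ℕ) + m, hm⟩, Finset.mem_coe.mpr hk'T⟩ := by
      show (k : ℕ) + 1 = ((⟨(i : ℕ) + m, hm⟩ : Fin r) : ℕ) ∨
        ((⟨(i : ℕ) + m, hm⟩ : Fin r) : ℕ) + 1 = (k : ℕ)
      right; simp; omega
    exact hadj.reachable.trans
      (ih (by simp) (fun m' h1 h2 => hall m' h1 (by simp at h2 ⊢; omega)) _ hi')

lemma isSubtree_mapL {S₀ : Finset V} (h : G.IsSubtree S₀) :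
    (addPath G u r).IsSubtree (S₀.map (Function.Embedding.inl)) := by
  refine ⟨Finset.Nonempty.map h.1, ?_⟩
  rw [connected_iff]
  refine ⟨?_, ?_⟩
  · rintro ⟨xv, hx⟩ ⟨yv, hy⟩
    obtain ⟨a, ha, rfl⟩ := Finset.mem_map.mp (Finset.mem_coe.mp hx)
    obtain ⟨b, hb, rfl⟩ := Finset.mem_map.mp (Finset.mem_coe.mp hy)
    exact reachable_inl G u h (fun x hx => Finset.mem_map_of_mem _ hx) ha hb hx hy
  · obtain ⟨a, ha⟩ := h.1
    exact ⟨⟨Sum.inl a, Finset.mem_coe.mpr (Finset.mem_map_of_mem _ ha)⟩⟩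

lemma isSubtree_mixed {S₀ : Finset V} (h : G.IsSubtree S₀) (hu : u ∈ S₀) (a : Fin r) :
    (addPath G u r).IsSubtree
      (S₀.map Function.Embedding.inl ∪ (Finset.Iic a).map Function.Embedding.inr) := by
  classical
  set T := S₀.map (Function.Embedding.inl (β := Fin r)) ∪
      (Finset.Iic a).map Function.Embedding.inr with hTdef
  have hmemL : ∀ x ∈ S₀, Sum.inl x ∈ T := fun x hx =>
    Finset.mem_union_left _ (Finset.mem_map_of_mem _ hx)
  have hmemR : ∀ k : Fin r, k ≤ a → Sum.inr k ∈ T := fun k hk =>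
    Finset.mem_union_right _ (Finset.mem_map_of_mem _ (Finset.mem_Iic.mpr hk))
  have huT : Sum.inl u ∈ (T : Set (V ⊕ Fin r)) := Finset.mem_coe.mpr (hmemL u hu)
  have key : ∀ (x : ↑(T : Set (V ⊕ Fin r))),
      ((addPath G u r).induce (T : Set (V ⊕ Fin r))).Reachable x ⟨Sum.inl u, huT⟩ := by
    rintro ⟨xv, hx⟩
    have hx' := Finset.mem_coe.mp hx
    rw [hTdef, Finset.mem_union] at hx'
    rcases hx' with hx' | hx'
    · obtain ⟨b, hb, rfl⟩ := Finset.mem_map.mp hx'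
      exact reachable_inl G u h hmemL hb hu hx huT
    · obtain ⟨k, hk, rfl⟩ := Finset.mem_map.mp hx'
      have hk' : k ≤ a := Finset.mem_Iic.mp hk
      have h0T : Sum.inr (⟨0, k.pos⟩ : Fin r) ∈ (T : Set (V ⊕ Fin r)) := by
        refine Finset.mem_coe.mpr (hmemR _ ?_)
        exact Fin.le_def.mpr (by simp)
      have hreach0 : ((addPath G u r).induce (T : Set (V ⊕ Fin r))).Reachable
          ⟨Sum.inr k, hx⟩ ⟨Sum.inr ⟨0, k.pos⟩, h0T⟩ := by
        refine reachable_inr_down G u (k : ℕ) (by simp) ?_ _ _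
        intro m _ hm
        refine hmemR m ?_
        refine le_trans (Fin.le_def.mpr ?_) hk'
        simpa using hm
      have hadj : ((addPath G u r).induce (T : Set (V ⊕ Fin r))).Adj
          ⟨Sum.inr ⟨0, k.pos⟩, h0T⟩ ⟨Sum.inl u, huT⟩ := by
        show u = u ∧ ((⟨0, k.pos⟩ : Fin r) : ℕ) = 0
        simp
      exact hreach0.trans hadj.reachable
  refine ⟨⟨Sum.inl u, hmemL u hu⟩, ?_⟩
  rw [connected_iff]
  exact ⟨fun x y => (key x).trans (key y).symm, ⟨⟨Sum.inl u, huT⟩⟩⟩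

lemma isSubtree_interval {i j : Fin r} (hij : i ≤ j) :
    (addPath G u r).IsSubtree ((Finset.Icc i j).map Function.Embedding.inr) := by
  refine ⟨Finset.Nonempty.map (Finset.nonempty_Icc.mpr hij), ?_⟩
  have hmem : ∀ k : Fin r, i ≤ k → k ≤ j →
      Sum.inr k ∈ (Finset.Icc i j).map (Function.Embedding.inr (α := V)) := fun k h1 h2 =>
    Finset.mem_map_of_mem _ (Finset.mem_Icc.mpr ⟨h1, h2⟩)
  have hiT : Sum.inr i ∈ ((Finset.Icc i j).map (Function.Embedding.inr (α := V)) :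
      Set (V ⊕ Fin r)) := Finset.mem_coe.mpr (hmem i le_rfl hij)
  have key : ∀ (x : ↑(((Finset.Icc i j).map (Function.Embedding.inr (α := V))) :
      Set (V ⊕ Fin r))),
      ((addPath G u r).induce _).Reachable x ⟨Sum.inr i, hiT⟩ := by
    rintro ⟨xv, hx⟩
    obtain ⟨k, hk, rfl⟩ := Finset.mem_map.mp (Finset.mem_coe.mp hx)
    rw [Finset.mem_Icc] at hk
    refine reachable_inr_down G u ((k : ℕ) - (i : ℕ)) ?_ ?_ _ _
    · have := Fin.le_def.mp hk.1; omega
    · intro m h1 h2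
      exact hmem m (Fin.le_def.mpr h1) (le_trans (Fin.le_def.mpr h2) hk.2)
  rw [connected_iff]
  exact ⟨fun x y => (key x).trans (key y).symm, ⟨⟨Sum.inr i, hiT⟩⟩⟩

end Shapes

section Structure
variable {V : Type*} [DecidableEq V] {r : ℕ} (G : SimpleGraph V) (u : V)

/-- Classification of subtrees of `addPath G u r`. -/
lemma subtree_structure {T : Finset (V ⊕ Fin r)} (hT : (addPath G u r).IsSubtree T) :
    (∃ S₀ : Finset V, G.IsSubtree S₀ ∧ T = S₀.map Function.Embedding.inl) ∨
    (∃ i j : Fin r, i ≤ j ∧ T = (Finset.Icc i j).map Function.Embedding.inr) ∨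
    (∃ S₀ : Finset V, ∃ a : Fin r, G.IsSubtree S₀ ∧ u ∈ S₀ ∧
      T = S₀.map Function.Embedding.inl ∪ (Finset.Iic a).map Function.Embedding.inr) := by
  classical
  set SL : Finset V := T.preimage Sum.inl (Sum.inl_injective.injOn) with hSL
  set SR : Finset (Fin r) := T.preimage Sum.inr (Sum.inr_injective.injOn) with hSR
  have hSLmem : ∀ x : V, x ∈ SL ↔ Sum.inl x ∈ T := fun x => Finset.mem_preimage
  have hSRmem : ∀ k : Fin r, k ∈ SR ↔ Sum.inr k ∈ T := fun k => Finset.mem_preimage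
  have hdecomp : T = SL.map Function.Embedding.inl ∪ SR.map Function.Embedding.inr := by
    ext w
    rcases w with a | k
    · simp [Finset.mem_union, hSLmem]
    · simp [Finset.mem_union, hSRmem]
  have hcoeSL : (SL : Set V) = {x : V | Sum.inl x ∈ T} := by
    ext x; simp [hSLmem]
  have hconnSL : SL.Nonempty → G.IsSubtree SL := by
    rintro ⟨a₀, ha₀⟩
    refine ⟨⟨a₀, ha₀⟩, ?_⟩
    rw [show ((SL : Set V)) = {x : V | Sum.inl x ∈ T} from hcoeSL, connected_iff]
    constructor
    · rintro ⟨x, hx⟩ ⟨y, hy⟩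
      have hx' : Sum.inl x ∈ (T : Set (V ⊕ Fin r)) := Finset.mem_coe.mpr hx
      have hy' : Sum.inl y ∈ (T : Set (V ⊕ Fin r)) := Finset.mem_coe.mpr hy
      obtain ⟨w⟩ := hT.2.preconnected ⟨Sum.inl x, hx'⟩ ⟨Sum.inl y, hy'⟩
      exact walk_Q G u T w hx hy
    · exact ⟨⟨a₀, (hSLmem a₀).mp ha₀⟩⟩
  by_cases hSRe : SR = ∅
  · left
    have hSLne : SL.Nonempty := by
      obtain ⟨w, hw⟩ := hT.1
      rcases w with a | k
      · exact ⟨a, (hSLmem a).mpr hw⟩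
      · exact absurd ((hSRmem k).mpr hw) (by simp [hSRe])
    refine ⟨SL, hconnSL hSLne, ?_⟩
    rw [hdecomp, hSRe, Finset.map_empty, Finset.union_empty]
  · have hne : SR.Nonempty := Finset.nonempty_iff_ne_empty.mpr hSRe
    by_cases hSLe : SL = ∅
    · right; left
      refine ⟨SR.min' hne, SR.max' hne, Finset.min'_le _ _ (SR.max'_mem hne), ?_⟩
      have hIcc : SR = Finset.Icc (SR.min' hne) (SR.max' hne) := by
        apply Finset.Subset.antisymm
        · intro k hk
          exact Finset.mem_Icc.mpr ⟨Finset.min'_le _ _ hk, Finset.le_max' _ _ hk⟩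
        · intro k hk
          rw [Finset.mem_Icc] at hk
          have hmin : Sum.inr (SR.min' hne) ∈ (T : Set (V ⊕ Fin r)) :=
            Finset.mem_coe.mpr ((hSRmem _).mp (SR.min'_mem hne))
          have hmax : Sum.inr (SR.max' hne) ∈ (T : Set (V ⊕ Fin r)) :=
            Finset.mem_coe.mpr ((hSRmem _).mp (SR.max'_mem hne))
          obtain ⟨w⟩ := hT.2.preconnected ⟨_, hmin⟩ ⟨_, hmax⟩
          have hq := walk_Q G u T w
          exact (hSRmem k).mpr (hq k (Or.inl ⟨Fin.le_def.mp hk.1, Fin.le_def.mp hk.2⟩))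
      rw [hdecomp, hSLe, Finset.map_empty, Finset.empty_union, ← hIcc]
    · right; right
      obtain ⟨a₀, ha₀⟩ := Finset.nonempty_iff_ne_empty.mpr hSLe
      have hmmem : Sum.inr (SR.max' hne) ∈ (T : Set (V ⊕ Fin r)) :=
        Finset.mem_coe.mpr ((hSRmem _).mp (SR.max'_mem hne))
      have hamem : Sum.inl a₀ ∈ (T : Set (V ⊕ Fin r)) :=
        Finset.mem_coe.mpr ((hSLmem _).mp ha₀)
      obtain ⟨w⟩ := hT.2.preconnected ⟨Sum.inr (SR.max' hne), hmmem⟩ ⟨Sum.inl a₀, hamem⟩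
      have hq := walk_Q G u T w
      have huSL : u ∈ SL := (hSLmem u).mpr hq.1
      have hSRIic : SR = Finset.Iic (SR.max' hne) := by
        apply Finset.Subset.antisymm
        · intro k hk
          exact Finset.mem_Iic.mpr (Finset.le_max' _ _ hk)
        · intro k hk
          exact (hSRmem k).mpr (hq.2.2 k (Fin.le_def.mp (Finset.mem_Iic.mp hk)))
      refine ⟨SL, SR.max' hne, hconnSL ⟨u, huSL⟩, huSL, ?_⟩
      rw [hdecomp]
      exact congrArg (fun s => SL.map Function.Embedding.inl ∪
        s.map Function.Embedding.inr) hSRIic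

end Structure

section Counting
variable {V : Type*} [Fintype V] [DecidableEq V]

/-- Number of subtrees of `G` containing `u`. -/
noncomputable def uCount (G : SimpleGraph V) (u : V) : ℕ :=
  Nat.card {S : Finset V // G.IsSubtree S ∧ u ∈ S}

lemma two_mul_subtreeCount_addPath (G : SimpleGraph V) (u : V) (r : ℕ) :
    2 * (addPath G u r).subtreeCount =
      2 * G.subtreeCount + r * (r + 1) + 2 * r * uCount G u := by
  classical
  have key : Nat.card {T : Finset (V ⊕ Fin r) // (addPath G u r).IsSubtree T} =
      Nat.card ({S : Finset V // G.IsSubtree S} ⊕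
      ((Σ j : Fin r, Fin ((j : ℕ) + 1)) ⊕
        ({S : Finset V // G.IsSubtree S ∧ u ∈ S} × Fin r))) := by
    refine (Nat.card_congr ?_).symm
    refine Equiv.ofBijective (fun x => ?_) ⟨?_, ?_⟩
    · exact match x with
      | .inl ⟨S₀, h⟩ => ⟨S₀.map Function.Embedding.inl, isSubtree_mapL G u h⟩
      | .inr (.inl ⟨j, i⟩) =>
          ⟨(Finset.Icc ⟨(i : ℕ), lt_of_le_of_lt (Nat.lt_succ_iff.mp i.2) j.2⟩ j).map
            Function.Embedding.inr,
           isSubtree_interval G u (Fin.le_def.mpr (Nat.lt_succ_iff.mp i.2))⟩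
      | .inr (.inr (⟨S₀, h, hu⟩, a)) =>
          ⟨S₀.map Function.Embedding.inl ∪ (Finset.Iic a).map Function.Embedding.inr,
           isSubtree_mixed G u h hu a⟩
    · rintro (⟨S₀, h⟩ | (⟨j, i⟩ | ⟨⟨S₀, h, hu⟩, a⟩)) (⟨S₀', h'⟩ | (⟨j', i'⟩ | ⟨⟨S₀', h', hu'⟩, a'⟩)) hxy <;>
        simp only [Subtype.mk.injEq] at hxy
      · exact congrArg Sum.inl (Subtype.ext (Finset.map_injective _ hxy))
      · obtain ⟨b, hb⟩ := h.1
        have : Sum.inl b ∈ S₀.map (Function.Embedding.inl (β := Fin r)) :=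
          Finset.mem_map_of_mem _ hb
        rw [hxy] at this
        simp at this
      · obtain ⟨b, hb⟩ := h.1
        have hmem : Sum.inr (⟨0, a'.pos⟩ : Fin r) ∈
            S₀'.map Function.Embedding.inl ∪ (Finset.Iic a').map Function.Embedding.inr := by
          refine Finset.mem_union_right _ (Finset.mem_map_of_mem _ (Finset.mem_Iic.mpr ?_))
          exact Fin.le_def.mpr (by simp)
        rw [← hxy] at hmem
        simp at hmem
      · obtain ⟨b, hb⟩ := h'.1
        have : Sum.inl b ∈ S₀'.map (Function.Embedding.inl (β := Fin r)) :=
          Finset.mem_map_of_mem _ hb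
        rw [← hxy] at this
        simp at this
      · -- interval vs interval
        have hIcc := Finset.map_injective _ hxy
        set ii : Fin r := ⟨(i : ℕ), lt_of_le_of_lt (Nat.lt_succ_iff.mp i.2) j.2⟩
        set ii' : Fin r := ⟨(i' : ℕ), lt_of_le_of_lt (Nat.lt_succ_iff.mp i'.2) j'.2⟩
        have hij : ii ≤ j := Fin.le_def.mpr (Nat.lt_succ_iff.mp i.2)
        have hij' : ii' ≤ j' := Fin.le_def.mpr (Nat.lt_succ_iff.mp i'.2)
        have h1 : ii ∈ Finset.Icc ii' j' := by
          rw [← hIcc]; exact Finset.mem_Icc.mpr ⟨le_rfl, hij⟩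
        have h2 : j ∈ Finset.Icc ii' j' := by
          rw [← hIcc]; exact Finset.mem_Icc.mpr ⟨hij, le_rfl⟩
        have h3 : ii' ∈ Finset.Icc ii j := by
          rw [hIcc]; exact Finset.mem_Icc.mpr ⟨le_rfl, hij'⟩
        have h4 : j' ∈ Finset.Icc ii j := by
          rw [hIcc]; exact Finset.mem_Icc.mpr ⟨hij', le_rfl⟩
        rw [Finset.mem_Icc] at h1 h2 h3 h4
        have hjj : j = j' := le_antisymm h2.2 h4.2
        subst hjj
        have hii : (i : ℕ) = (i' : ℕ) := le_antisymm (Fin.le_def.mp h3.1) (Fin.le_def.mp h1.1)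
        exact congrArg _ (congrArg _ (congrArg _ (Fin.ext hii)))
      · -- interval vs mixed : mixed contains inl u
        have hmem : Sum.inl u ∈
            S₀'.map Function.Embedding.inl ∪ (Finset.Iic a').map Function.Embedding.inr :=
          Finset.mem_union_left _ (Finset.mem_map_of_mem _ hu')
        rw [← hxy] at hmem
        simp at hmem
      · obtain ⟨b, hb⟩ := h.1
        have hmem : Sum.inr (⟨0, a.pos⟩ : Fin r) ∈
            S₀.map Function.Embedding.inl ∪ (Finset.Iic a).map Function.Embedding.inr := by
          refine Finset.mem_union_right _ (Finset.mem_map_of_mem _ (Finset.mem_Iic.mpr ?_))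
          exact Fin.le_def.mpr (by simp)
        rw [hxy] at hmem
        simp at hmem
      · have hmem : Sum.inl u ∈
            S₀.map Function.Embedding.inl ∪ (Finset.Iic a).map Function.Embedding.inr :=
          Finset.mem_union_left _ (Finset.mem_map_of_mem _ hu)
        rw [hxy] at hmem
        simp at hmem
      · -- mixed vs mixed
        have hS : S₀ = S₀' := by
          ext x
          have := Finset.ext_iff.mp hxy (Sum.inl x)
          simpa using this
        have ha : a = a' := by
          have h1 := Finset.ext_iff.mp hxy (Sum.inr a)
          have h2 := Finset.ext_iff.mp hxy (Sum.inr a')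
          simp at h1 h2
          exact le_antisymm h1 h2
        subst hS; subst ha; rfl
    · rintro ⟨T, hT⟩
      rcases subtree_structure G u hT with ⟨S₀, h, rfl⟩ | ⟨i, j, hij, rfl⟩ |
        ⟨S₀, a, h, hu, rfl⟩
      · exact ⟨.inl ⟨S₀, h⟩, rfl⟩
      · refine ⟨.inr (.inl ⟨j, ⟨(i : ℕ), Nat.lt_succ_iff.mpr (Fin.le_def.mp hij)⟩⟩), ?_⟩
        apply Subtype.ext
        simp
      · exact ⟨.inr (.inr (⟨S₀, h, hu⟩, a)), rfl⟩
  have hsum : ∀ n : ℕ, 2 * ∑ i ∈ Finset.range n, (i + 1) = n * (n + 1) := by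
    intro n
    induction n with
    | zero => rfl
    | succ m ihm =>
      rw [Finset.sum_range_succ, Nat.mul_add, ihm]
      ring
  have hI : 2 * Nat.card (Σ j : Fin r, Fin ((j : ℕ) + 1)) = r * (r + 1) := by
    rw [Nat.card_eq_fintype_card, Fintype.card_sigma]
    simp only [Fintype.card_fin]
    rw [Fin.sum_univ_eq_sum_range (fun n => n + 1) r]
    exact hsum r
  show 2 * Nat.card {T : Finset (V ⊕ Fin r) // (addPath G u r).IsSubtree T} =
    2 * Nat.card {S : Finset V // G.IsSubtree S} + r * (r + 1) +
      2 * r * Nat.card {S : Finset V // G.IsSubtree S ∧ u ∈ S}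
  rw [key, Nat.card_sum, Nat.card_sum, Nat.card_prod,
    Nat.card_eq_fintype_card (α := Fin r), Fintype.card_fin, ← hI]
  ring

end Counting

section Counting2
variable {V : Type*} [Fintype V] [DecidableEq V]

lemma uCount_addPath (G : SimpleGraph V) (u : V) (r : ℕ) :
    uCount (addPath G u r) (Sum.inl u) = uCount G u * (r + 1) := by
  classical
  have key : Nat.card {T : Finset (V ⊕ Fin r) //
        (addPath G u r).IsSubtree T ∧ Sum.inl u ∈ T} =
      Nat.card ({S : Finset V // G.IsSubtree S ∧ u ∈ S} × Option (Fin r)) := by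
    refine (Nat.card_congr ?_).symm
    refine Equiv.ofBijective (fun x => ?_) ⟨?_, ?_⟩
    · exact match x with
      | (⟨S₀, h, hu⟩, none) =>
          ⟨S₀.map Function.Embedding.inl,
           ⟨isSubtree_mapL G u h, Finset.mem_map_of_mem _ hu⟩⟩
      | (⟨S₀, h, hu⟩, some a) =>
          ⟨S₀.map Function.Embedding.inl ∪ (Finset.Iic a).map Function.Embedding.inr,
           ⟨isSubtree_mixed G u h hu a,
            Finset.mem_union_left _ (Finset.mem_map_of_mem _ hu)⟩⟩
    · rintro (⟨⟨S₀, h, hu⟩, (_ | a)⟩) (⟨⟨S₀', h', hu'⟩, (_ | a')⟩) hxy <;>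
        simp only [Subtype.mk.injEq] at hxy
      · have := Finset.map_injective (Function.Embedding.inl (β := Fin r)) hxy
        subst this; rfl
      · have hmem : Sum.inr (⟨0, a'.pos⟩ : Fin r) ∈
            S₀'.map Function.Embedding.inl ∪ (Finset.Iic a').map Function.Embedding.inr := by
          refine Finset.mem_union_right _ (Finset.mem_map_of_mem _ (Finset.mem_Iic.mpr ?_))
          exact Fin.le_def.mpr (by simp)
        rw [← hxy] at hmem
        simp at hmem
      · have hmem : Sum.inr (⟨0, a.pos⟩ : Fin r) ∈
            S₀.map Function.Embedding.inl ∪ (Finset.Iic a).map Function.Embedding.inr := by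
          refine Finset.mem_union_right _ (Finset.mem_map_of_mem _ (Finset.mem_Iic.mpr ?_))
          exact Fin.le_def.mpr (by simp)
        rw [hxy] at hmem
        simp at hmem
      · have hS : S₀ = S₀' := by
          ext x
          have := Finset.ext_iff.mp hxy (Sum.inl x)
          simpa using this
        have ha : a = a' := by
          have h1 := Finset.ext_iff.mp hxy (Sum.inr a)
          have h2 := Finset.ext_iff.mp hxy (Sum.inr a')
          simp at h1 h2
          exact le_antisymm h1 h2
        subst hS; subst ha; rfl
    · rintro ⟨T, hT, huT⟩
      rcases subtree_structure G u hT with ⟨S₀, h, rfl⟩ | ⟨i, j, hij, rfl⟩ |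
        ⟨S₀, a, h, hu, rfl⟩
      · refine ⟨(⟨S₀, h, ?_⟩, none), rfl⟩
        simpa using huT
      · simp at huT
      · exact ⟨(⟨S₀, h, hu⟩, some a), rfl⟩
  show Nat.card {T : Finset (V ⊕ Fin r) // (addPath G u r).IsSubtree T ∧ Sum.inl u ∈ T} =
    Nat.card {S : Finset V // G.IsSubtree S ∧ u ∈ S} * (r + 1)
  rw [key, Nat.card_prod, Nat.card_eq_fintype_card (α := Option (Fin r)),
    Fintype.card_option, Fintype.card_fin]

lemma two_le_uCount (G : SimpleGraph V) (hG : G.Connected) (hV : 2 ≤ Fintype.card V)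
    (u : V) : 2 ≤ uCount G u := by
  classical
  obtain ⟨v, hv⟩ := Fintype.exists_ne_of_one_lt_card (by omega) u
  obtain ⟨w⟩ := hG.preconnected u v
  have hadj : ∃ z, G.Adj u z := by
    cases w with
    | nil => exact absurd rfl hv.symm
    | cons h p => exact ⟨_, h⟩
  obtain ⟨z, hz⟩ := hadj
  have hzu : z ≠ u := fun h => G.loopless.irrefl u (h ▸ hz)
  have h1 : G.IsSubtree {u} := by
    refine ⟨⟨u, Finset.mem_singleton_self u⟩, ?_⟩
    rw [connected_iff]
    constructor
    · rintro ⟨x, hx⟩ ⟨y, hy⟩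
      simp only [Finset.coe_singleton, Set.mem_singleton_iff] at hx hy
      subst hx; subst hy
      exact Reachable.refl _
    · exact ⟨⟨u, by simp⟩⟩
  have h2 : G.IsSubtree {u, z} := by
    refine ⟨⟨u, by simp⟩, ?_⟩
    rw [connected_iff]
    have humem : u ∈ (({u, z} : Finset V) : Set V) := by simp
    have hzmem : z ∈ (({u, z} : Finset V) : Set V) := by simp
    have key : ∀ x : ↑(({u, z} : Finset V) : Set V),
        (G.induce (({u, z} : Finset V) : Set V)).Reachable x ⟨u, humem⟩ := by
      rintro ⟨x, hx⟩
      simp only [Finset.coe_insert, Finset.coe_singleton, Set.mem_insert_iff,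
        Set.mem_singleton_iff] at hx
      rcases hx with rfl | rfl
      · exact Reachable.refl _
      · exact SimpleGraph.Adj.reachable (by exact hz.symm)
    exact ⟨fun x y => (key x).trans (key y).symm, ⟨⟨u, humem⟩⟩⟩
  have hne : ({u} : Finset V) ≠ {u, z} := by
    intro h
    have : z ∈ ({u} : Finset V) := h ▸ (by simp : z ∈ ({u, z} : Finset V))
    simp at this
    exact hzu this
  have : Nontrivial {S : Finset V // G.IsSubtree S ∧ u ∈ S} := by
    refine ⟨⟨⟨{u}, h1, by simp⟩, ⟨{u, z}, h2, by simp⟩, ?_⟩⟩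
    intro h
    exact hne (congrArg Subtype.val h)
  have := Finite.one_lt_card_iff_nontrivial.mpr this
  unfold uCount
  omega

end Counting2

/-- The fourth tree transformation. Let `T₀` be a tree with at least two vertices,
`u` a vertex of `T₀`, and `T₀(s, t)` the tree obtained from `T₀` by attaching two
disjoint pendant paths at `u`, with `s` and `t` new vertices respectively. Then for
all `s ≥ 2` and `t ≥ 2`, `χ(T₀(s, t)) > χ(T₀(s + t - 1, 1))`. -/
theorem fourth_transformation_subtree_count {V : Type*} [Fintype V]
    (G : SimpleGraph V) (hG : G.IsTree) (hV : 2 ≤ Fintype.card V)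
    (u : V) (s t : ℕ) (hs : 2 ≤ s) (ht : 2 ≤ t) :
    (addPath (addPath G u (s + t - 1)) (Sum.inl u) 1).subtreeCount <
      (addPath (addPath G u s) (Sum.inl u) t).subtreeCount := by
  classical
  obtain ⟨a, rfl⟩ : ∃ a, s = a + 2 := ⟨s - 2, by omega⟩
  obtain ⟨b, rfl⟩ : ∃ b, t = b + 2 := ⟨t - 2, by omega⟩
  have hm : (a + 2) + (b + 2) - 1 = a + b + 3 := by omega
  rw [hm]
  have hf : 2 ≤ uCount G u := two_le_uCount G hG.isConnected hV u
  obtain ⟨f, hfe⟩ : ∃ f, uCount G u = f + 2 := ⟨uCount G u - 2, by omega⟩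
  have hB1 := two_mul_subtreeCount_addPath G u (a + 2)
  have hB2 := uCount_addPath G u (a + 2)
  have hB3 := two_mul_subtreeCount_addPath (addPath G u (a + 2)) (Sum.inl u) (b + 2)
  have hA1 := two_mul_subtreeCount_addPath G u (a + b + 3)
  have hA2 := uCount_addPath G u (a + b + 3)
  have hA3 := two_mul_subtreeCount_addPath (addPath G u (a + b + 3)) (Sum.inl u) 1
  rw [hB2] at hB3
  rw [hA2] at hA3
  rw [hfe] at hB1 hB3 hA1 hA3
  zify at hB1 hB3 hA1 hA3
  have key : ((addPath (addPath G u (a + b + 3)) (Sum.inl u) 1).subtreeCount : ℤ) * 2 +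
      2 * ((f : ℤ) + 1) * ((a : ℤ) + 1) * ((b : ℤ) + 1) =
      ((addPath (addPath G u (a + 2)) (Sum.inl u) (b + 2)).subtreeCount : ℤ) * 2 := by
    linear_combination hA1 + hA3 - hB1 - hB3
  have hpos : (0 : ℤ) < 2 * ((f : ℤ) + 1) * ((a : ℤ) + 1) * ((b : ℤ) + 1) := by positivity
  have hlt : ((addPath (addPath G u (a + b + 3)) (Sum.inl u) 1).subtreeCount : ℤ) <
      ((addPath (addPath G u (a + 2)) (Sum.inl u) (b + 2)).subtreeCount : ℤ) := by linarith
  exact_mod_cast hlt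
end
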